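/- arXiv:2206.05088 — 9 statements merged into one kernel-verified Lean document; each statement's English description precedes it below -/
import Mathlib

section
/- Let d ≥ 1, let H ∈ ℝ^{d×d} be symmetric, let M ∈ ℝ^{d×d}, set Q := H M and G := Qᵀ + Q − Mᵀ H M. Then for all v, ṽ, w ∈ ℝ^d, with v⁺ := v − M(v − ṽ), one has (w − ṽ)ᵀ Q (v − ṽ) = (1/2)(‖v⁺ − w‖²_H − ‖v − w‖²_H) + (1/2)‖v − ṽ‖²_G. -/
open Matrix

/-- `qf D w = wᵀ D w`, the (possibly indefinite) quadratic form `‖w‖²_D`. -/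
noncomputable def qf {m : Type*} [Fintype m] (D : Matrix m m ℝ) (w : m → ℝ) : ℝ :=
  w ⬝ᵥ D.mulVec w

/-- Key algebraic identity behind Lemma 2.2: with `Q = HM`,
`G = Qᵀ + Q - MᵀHM` and the correction step `v⁺ = v - M(v - ṽ)`,
`(w - ṽ)ᵀ Q (v - ṽ) = ½(‖v⁺ - w‖²_H - ‖v - w‖²_H) + ½‖v - ṽ‖²_G`. -/
theorem stmt0 {d : ℕ} (hd : 1 ≤ d)
    (H M : Matrix (Fin d) (Fin d) ℝ) (hH : H.IsSymm)
    (Q G : Matrix (Fin d) (Fin d) ℝ)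
    (hQ : Q = H * M) (hG : G = Qᵀ + Q - Mᵀ * H * M) :
    ∀ v vt w : Fin d → ℝ,
      (w - vt) ⬝ᵥ Q.mulVec (v - vt) =
        (1 / 2) * (qf H ((v - M.mulVec (v - vt)) - w) - qf H (v - w))
          + (1 / 2) * qf G (v - vt) := by
  subst hQ hG
  intro v vt w
  have key : ∀ x y : Fin d → ℝ, x ⬝ᵥ H.mulVec y = y ⬝ᵥ H.mulVec x := by
    intro x y
    rw [Matrix.dotProduct_mulVec, ← Matrix.mulVec_transpose, hH.eq, dotProduct_comm]
  have hMt : ∀ x y : Fin d → ℝ, x ⬝ᵥ (Mᵀ).mulVec y = (M.mulVec x) ⬝ᵥ y := by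
    intro x y
    rw [Matrix.dotProduct_mulVec, Matrix.vecMul_transpose]
  have h1 : (v - M.mulVec (v - vt)) - w = (v - w) - M.mulVec (v - vt) := by
    abel
  rw [h1]
  set a := v - vt with ha
  set b := v - w with hb
  set c := M.mulVec a with hc
  have e1 : (H * M).mulVec a = H.mulVec c := by rw [← Matrix.mulVec_mulVec]
  have e2 : (H * M)ᵀ = Mᵀ * H := by rw [Matrix.transpose_mul, hH.eq]
  simp only [qf, e2, e1, Matrix.add_mulVec, Matrix.sub_mulVec, Matrix.mulVec_sub,
    dotProduct_sub, sub_dotProduct, dotProduct_add,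
    add_dotProduct, ← Matrix.mulVec_mulVec, hMt]
  have hwvt : w ⬝ᵥ H.mulVec c - vt ⬝ᵥ H.mulVec c = a ⬝ᵥ H.mulVec c - b ⬝ᵥ H.mulVec c := by
    rw [← sub_dotProduct, ← sub_dotProduct]
    congr 1
    rw [ha, hb]
    abel
  linear_combination (1/2) * key a c - (1/2) * key b c + hwvt
end

section
/- Let n, l ≥ 1 and d = n + l. Let f : ℝⁿ → ℝ, A ∈ ℝ^{l×n}, b ∈ ℝ^l, σ ≥ 0, and let R ∈ ℝ^{n×n} be symmetric positive semidefinite. Let H ∈ ℝ^{d×d} be symmetric, M ∈ ℝ^{d×d}, Q := H M, and G := Qᵀ + Q − Mᵀ H M. Let v^k = (x^k, λ^k) ∈ ℝⁿ × ℝ^l, ṽ = (x̃, λ̃) ∈ ℝⁿ × ℝ^l, and z^k ∈ ℝⁿ. Suppose that for every u = (x, λ) ∈ ℝⁿ × ℝ^l: f(x) − f(x̃) + (x − x̃)ᵀ(−Aᵀλ̃) + (λ − λ̃)ᵀ(A x̃ − b) ≥ (u − ṽ)ᵀ Q (v^k − ṽ) + (σ/2)‖z^k − x‖²_R, and define v^{k+1}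 := v^k − M(v^k − ṽ). Then for every u = (x, λ) ∈ ℝⁿ × ℝ^l: f(x) − f(x̃) + (x − x̃)ᵀ(−Aᵀλ̃) + (λ − λ̃)ᵀ(A x̃ − b) ≥ (1/2)(‖v^{k+1} − u‖²_H + σ‖z^k − x‖²_R − ‖v^k − u‖²_H) + (1/2)‖v^k − ṽ‖²_G. -/
open Matrix

lemma symm_dot {m : Type*} [Fintype m] {H : Matrix m m ℝ} (hH : H.IsSymm)
    (w y : m → ℝ) : w ⬝ᵥ H.mulVec y = y ⬝ᵥ H.mulVec w := by
  rw [Matrix.dotProduct_mulVec, ← Matrix.mulVec_transpose, hH.eq, dotProduct_comm]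

lemma qf_sub {m : Type*} [Fintype m] {H : Matrix m m ℝ} (hH : H.IsSymm)
    (w y : m → ℝ) :
    qf H (w - y) = qf H w - 2 * (w ⬝ᵥ H.mulVec y) + qf H y := by
  simp only [qf, Matrix.mulVec_sub, sub_dotProduct, dotProduct_sub]
  rw [symm_dot hH y w]
  ring

/-- Lemma 2.2 for problem (P1): the generalized prediction step (GPS) together
with the generalized correction step (GCS) `v^{k+1} = v^k - M(v^k - ṽ)` and the
convergence conditions `Q = HM`, `G = Qᵀ + Q - MᵀHM` yields the telescoping
inequality. Vectors `u = (x, λ) ∈ ℝⁿ × ℝˡ` are encoded via `Fin.append`. -/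
theorem stmt1 {n l : ℕ} (hn : 1 ≤ n) (hl : 1 ≤ l)
    (f : (Fin n → ℝ) → ℝ) (A : Matrix (Fin l) (Fin n) ℝ) (b : Fin l → ℝ)
    (σ : ℝ) (hσ : 0 ≤ σ)
    (R : Matrix (Fin n) (Fin n) ℝ) (hR : R.PosSemidef)
    (H M : Matrix (Fin (n + l)) (Fin (n + l)) ℝ) (hH : H.IsSymm)
    (Q G : Matrix (Fin (n + l)) (Fin (n + l)) ℝ)
    (hQ : Q = H * M) (hG : G = Qᵀ + Q - Mᵀ * H * M)
    (xk : Fin n → ℝ) (lamk : Fin l → ℝ) (xt : Fin n → ℝ) (lamt : Fin l → ℝ)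
    (zk : Fin n → ℝ)
    (vk vkk vt : Fin (n + l) → ℝ)
    (hvk : vk = Fin.append xk lamk) (hvt : vt = Fin.append xt lamt)
    (hGPS : ∀ (x : Fin n → ℝ) (lam : Fin l → ℝ),
      f x - f xt + (x - xt) ⬝ᵥ (-(Aᵀ.mulVec lamt)) + (lam - lamt) ⬝ᵥ (A.mulVec xt - b)
        ≥ (Fin.append x lam - vt) ⬝ᵥ Q.mulVec (vk - vt) + σ / 2 * qf R (zk - x))
    (hGCS : vkk = vk - M.mulVec (vk - vt)) :
    ∀ (x : Fin n → ℝ) (lam : Fin l → ℝ),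
      f x - f xt + (x - xt) ⬝ᵥ (-(Aᵀ.mulVec lamt)) + (lam - lamt) ⬝ᵥ (A.mulVec xt - b)
        ≥ (1 / 2) * (qf H (vkk - Fin.append x lam) + σ * qf R (zk - x)
            - qf H (vk - Fin.append x lam))
          + (1 / 2) * qf G (vk - vt) := by
  intro x lam
  refine le_trans (le_of_eq ?_) (hGPS x lam)
  set u := Fin.append x lam
  set a := vk - vt with ha
  have hQa : H.mulVec (M.mulVec a) = Q.mulVec a := by
    rw [hQ, Matrix.mulVec_mulVec]
  -- expand qf H (vkk - u)
  have h1 : vkk - u = (vk - u) - M.mulVec a := by rw [hGCS]; abel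
  have hqf1 : qf H (vkk - u) =
      qf H (vk - u) - 2 * ((vk - u) ⬝ᵥ Q.mulVec a) + qf H (M.mulVec a) := by
    rw [h1, qf_sub hH, hQa]
  -- qf G a
  have hQsym : a ⬝ᵥ Qᵀ.mulVec a = a ⬝ᵥ Q.mulVec a := by
    rw [Matrix.dotProduct_mulVec, ← Matrix.mulVec_transpose, Matrix.transpose_transpose,
      dotProduct_comm]
  have hMHM : a ⬝ᵥ (Mᵀ * H * M).mulVec a = qf H (M.mulVec a) := by
    rw [qf, Matrix.mul_assoc, ← Matrix.mulVec_mulVec, Matrix.dotProduct_mulVec,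
      Matrix.vecMul_transpose, ← Matrix.mulVec_mulVec]
  have hqfG : qf G a = 2 * (a ⬝ᵥ Q.mulVec a) - qf H (M.mulVec a) := by
    rw [qf, hG, Matrix.sub_mulVec, Matrix.add_mulVec, dotProduct_sub,
      dotProduct_add, hQsym, hMHM]
    ring
  have hu : u - vt = (u - vk) + a := by rw [ha]; abel
  have hsplit : (u - vt) ⬝ᵥ Q.mulVec a = (u - vk) ⬝ᵥ Q.mulVec a + a ⬝ᵥ Q.mulVec a := by
    rw [hu, add_dotProduct]
  have hneg : (u - vk) ⬝ᵥ Q.mulVec a = -((vk - u) ⬝ᵥ Q.mulVec a) := by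
    have : u - vk = -(vk - u) := by abel
    rw [this, neg_dotProduct]
  rw [hqf1, hqfG, hsplit, hneg]
  ring
end

section
/- Let f : ℝⁿ → ℝ be convex, A ∈ ℝ^{l×n}, b ∈ ℝ^l, x' ∈ ℝⁿ with A x' = b, and λ ∈ ℝ^l. Let d ≥ 1, K ≥ 0, and for k = 0, …, K+1 let v^k ∈ ℝ^d, H₀^k ∈ ℝ^{d×d} be symmetric positive semidefinite, and Θ^k ≥ 0; let v' ∈ ℝ^d, and for k = 0, …, K let r^k > 0 and x̃^k ∈ ℝⁿ. Suppose that for each k = 0, …, K: r^k ( f(x') − f(x̃^k) + λᵀ(A x̃^k − b) ) ≥ (1/2)( ‖v^{k+1} − v'‖²_{H₀^{k+1}} − ‖v^k − v'‖²_{H₀^k} + Θ^{k+1} − Θ^k ). Then, with X̃^K := (Σ_{k=0}^K r^k x̃^k) / (Σ_{k=0}^K r^k), one has f(X̃^K) − f(x') − λᵀ(A X̃^K − b) ≤ ( ‖v^0 − v'‖²_{H₀^0} + Θ^0 ) / ( 2 Σ_{k=0}^K r^k ). -/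
open Matrix

/-- Theorem 2.3: summing the per-iteration inequality of the generalized
prediction-correction framework and applying Jensen's inequality yields the
ergodic bound `f(X̃ᴷ) - f(x') - λᵀ(AX̃ᴷ - b) ≤ (‖v⁰ - v'‖²_{H₀⁰} + Θ⁰) / (2 Σ rᵏ)`
where `X̃ᴷ = (Σ rᵏ x̃ᵏ)/(Σ rᵏ)`. -/
theorem stmt2 {n l d : ℕ} (hd : 1 ≤ d)
    (f : (Fin n → ℝ) → ℝ) (hf : ConvexOn ℝ Set.univ f)
    (A : Matrix (Fin l) (Fin n) ℝ) (b : Fin l → ℝ)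
    (x' : Fin n → ℝ) (hx' : A.mulVec x' = b) (lam : Fin l → ℝ)
    (K : ℕ)
    (v : ℕ → Fin d → ℝ) (H0 : ℕ → Matrix (Fin d) (Fin d) ℝ) (Θ : ℕ → ℝ)
    (hH0 : ∀ k ≤ K + 1, (H0 k).PosSemidef)
    (hΘ : ∀ k ≤ K + 1, 0 ≤ Θ k)
    (v' : Fin d → ℝ)
    (r : ℕ → ℝ) (hr : ∀ k ≤ K, 0 < r k)
    (xt : ℕ → Fin n → ℝ)
    (hstep : ∀ k ≤ K,
      r k * (f x' - f (xt k) + lam ⬝ᵥ (A.mulVec (xt k) - b))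
        ≥ (1 / 2) * (qf (H0 (k + 1)) (v (k + 1) - v') - qf (H0 k) (v k - v')
            + Θ (k + 1) - Θ k)) :
    f ((∑ k ∈ Finset.range (K + 1), r k)⁻¹ • ∑ k ∈ Finset.range (K + 1), r k • xt k)
      - f x'
      - lam ⬝ᵥ (A.mulVec ((∑ k ∈ Finset.range (K + 1), r k)⁻¹ •
          ∑ k ∈ Finset.range (K + 1), r k • xt k) - b)
      ≤ (qf (H0 0) (v 0 - v') + Θ 0) / (2 * ∑ k ∈ Finset.range (K + 1), r k) := by
  classical
  set T := Finset.range (K + 1) with hT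
  have hrle : ∀ k ∈ T, 0 < r k := fun k hk =>
    hr k (Nat.lt_succ_iff.mp (Finset.mem_range.mp hk))
  have hS : 0 < ∑ k ∈ T, r k :=
    Finset.sum_pos hrle ⟨0, Finset.mem_range.mpr (Nat.succ_pos K)⟩
  set S := ∑ k ∈ T, r k with hSdef
  set X := S⁻¹ • ∑ k ∈ T, r k • xt k with hX
  set g : (Fin n → ℝ) → ℝ := fun x => lam ⬝ᵥ (A.mulVec x - b) with hg
  obtain ⟨a, ha⟩ : ∃ a : ℕ → ℝ, ∀ k, a k = qf (H0 k) (v k - v') + Θ k :=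
    ⟨_, fun k => rfl⟩
  -- sum of step inequalities, telescoped
  have hsum : (1 / 2) * (a (K + 1) - a 0)
      ≤ ∑ k ∈ T, r k * (f x' - f (xt k) + g (xt k)) := by
    have h1 : ∑ k ∈ T, (1 / 2) * (a (k + 1) - a k) = (1 / 2) * (a (K + 1) - a 0) := by
      rw [← Finset.mul_sum, Finset.sum_range_sub (f := a)]
    rw [← h1]
    refine Finset.sum_le_sum fun k hk => ?_
    have := hstep k (Nat.lt_succ_iff.mp (Finset.mem_range.mp hk))
    have : (1 / 2) * (qf (H0 (k + 1)) (v (k + 1) - v') - qf (H0 k) (v k - v')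
        + Θ (k + 1) - Θ k) ≤ r k * (f x' - f (xt k) + g (xt k)) := this
    calc (1 / 2) * (a (k + 1) - a k)
        = (1 / 2) * (qf (H0 (k + 1)) (v (k + 1) - v') - qf (H0 k) (v k - v')
            + Θ (k + 1) - Θ k) := by rw [ha, ha]; ring
      _ ≤ _ := this
  have haK : 0 ≤ a (K + 1) := by
    have h1 := (hH0 (K + 1) le_rfl).dotProduct_mulVec_nonneg (v (K + 1) - v')
    have h2 := hΘ (K + 1) le_rfl
    rw [ha]; exact add_nonneg h1 h2
  have hsum' : -(1 / 2) * a 0 ≤ ∑ k ∈ T, r k * (f x' - f (xt k) + g (xt k)) := by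
    refine le_trans ?_ hsum; linarith
  -- Jensen
  have hjensen : f X ≤ S⁻¹ * ∑ k ∈ T, r k * f (xt k) := by
    have := hf.map_centerMass_le (t := T) (w := r) (p := xt)
      (fun k hk => (hrle k hk).le) hS (fun k _ => Set.mem_univ _)
    simpa [Finset.centerMass, hX, hSdef, smul_eq_mul, Finset.mul_sum,
      Function.comp] using this
  -- linearity of g
  have hdot : ∀ (u : ℕ → Fin l → ℝ), lam ⬝ᵥ ∑ k ∈ T, u k = ∑ k ∈ T, lam ⬝ᵥ u k := by
    intro u
    simp only [dotProduct, Finset.sum_apply, Finset.mul_sum]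
    rw [Finset.sum_comm]
  have hlin : g X = S⁻¹ * ∑ k ∈ T, r k * g (xt k) := by
    have hmv : A.mulVec X = S⁻¹ • ∑ k ∈ T, r k • A.mulVec (xt k) := by
      rw [hX, Matrix.mulVec_smul]
      congr 1
      rw [← Matrix.mulVecLin_apply, map_sum]
      exact Finset.sum_congr rfl fun k _ => by simp [Matrix.mulVecLin_apply]
    have h1 : ∀ k, g (xt k) = lam ⬝ᵥ A.mulVec (xt k) - lam ⬝ᵥ b := fun k => by
      simp [hg, dotProduct_sub]
    have h2 : g X = S⁻¹ * (∑ k ∈ T, r k * (lam ⬝ᵥ A.mulVec (xt k))) - lam ⬝ᵥ b := by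
      simp only [hg, dotProduct_sub, hmv, dotProduct_smul, smul_eq_mul, hdot]
    have h3 : ∑ k ∈ T, r k * g (xt k)
        = (∑ k ∈ T, r k * (lam ⬝ᵥ A.mulVec (xt k))) - S * (lam ⬝ᵥ b) := by
      simp only [h1, mul_sub]
      rw [Finset.sum_sub_distrib, ← Finset.sum_mul, ← hSdef]
    rw [h2, h3]
    field_simp
  have key : ∑ k ∈ T, r k * f (xt k) - S * f x' - ∑ k ∈ T, r k * g (xt k)
      ≤ (1 / 2) * a 0 := by
    have : ∑ k ∈ T, r k * (f x' - f (xt k) + g (xt k))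
        = S * f x' - ∑ k ∈ T, r k * f (xt k) + ∑ k ∈ T, r k * g (xt k) := by
      rw [hSdef, Finset.sum_mul, ← Finset.sum_sub_distrib, ← Finset.sum_add_distrib]
      exact Finset.sum_congr rfl fun k _ => by ring
    nlinarith [hsum']
  have hSinv : 0 < S⁻¹ := inv_pos.mpr hS
  have : f X - f x' - g X ≤ S⁻¹ * ((1 / 2) * a 0) :=
    calc f X - f x' - g X
        ≤ S⁻¹ * ∑ k ∈ T, r k * f (xt k) - f x'
            - S⁻¹ * ∑ k ∈ T, r k * g (xt k) := by
          rw [hlin]; linarith [hjensen]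
      _ = S⁻¹ * (∑ k ∈ T, r k * f (xt k) - S * f x' - ∑ k ∈ T, r k * g (xt k)) := by
          field_simp
      _ ≤ S⁻¹ * ((1 / 2) * a 0) := by
          exact mul_le_mul_of_nonneg_left key hSinv.le
  have hfin : S⁻¹ * ((1 / 2) * a 0) = a 0 / (2 * S) := by
    rw [eq_div_iff (by positivity : (2:ℝ) * S ≠ 0)]
    field_simp
  rw [hfin, ha] at this
  exact this
end

section
/- Let f : ℝⁿ → ℝ, A ∈ ℝ^{l×n}, b ∈ ℝ^l, β > 0, σ ≥ 0, let D ∈ ℝ^{n×n} be symmetric, and let λ^k ∈ ℝ^l and x^k, x^{k+1} ∈ ℝⁿ. Assume the first-order optimality inequality of the GPALM x-subproblem: for all x ∈ ℝⁿ, f(x) − f(x^{k+1}) + (x − x^{k+1})ᵀ[ −Aᵀλ^k + β Aᵀ(A x^{k+1} − b) + D(x^{k+1} − x^k) ] ≥ (σ/2)‖x^{k+1} − x‖². Set x̃ := x^{k+1} and λ̃ := λ^k − β(A x̃ − b). Then for all (x, λ) ∈ ℝⁿ × ℝ^l: f(x) − f(x̃) + (x − x̃)ᵀ(−Aᵀλ̃)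 + (λ − λ̃)ᵀ(A x̃ − b) ≥ (x − x̃)ᵀ D (x^k − x̃) + (1/β)(λ − λ̃)ᵀ(λ^k − λ̃) + (σ/2)‖x̃ − x‖². -/
open Matrix

/-- The GPALM iteration satisfies the generalized prediction step: from the
first-order optimality inequality of the `x`-subproblem, with `x̃ = x^{k+1}`
and `λ̃ = λᵏ - β(Ax̃ - b)`, the prediction inequality holds with
`Q = blockdiag(D, (1/β)I_l)`. -/
theorem stmt4 {n l : ℕ}
    (f : (Fin n → ℝ) → ℝ) (A : Matrix (Fin l) (Fin n) ℝ) (b : Fin l → ℝ)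
    (β σ : ℝ) (hβ : 0 < β) (hσ : 0 ≤ σ)
    (D : Matrix (Fin n) (Fin n) ℝ) (hD : D.IsSymm)
    (lamk : Fin l → ℝ) (xk xkk : Fin n → ℝ)
    (hopt : ∀ x : Fin n → ℝ,
      f x - f xkk + (x - xkk) ⬝ᵥ
          (-(Aᵀ.mulVec lamk) + β • Aᵀ.mulVec (A.mulVec xkk - b) + D.mulVec (xkk - xk))
        ≥ σ / 2 * ((xkk - x) ⬝ᵥ (xkk - x)))
    (xt : Fin n → ℝ) (lamt : Fin l → ℝ)
    (hxt : xt = xkk) (hlamt : lamt = lamk - β • (A.mulVec xt - b)) :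
    ∀ (x : Fin n → ℝ) (lam : Fin l → ℝ),
      f x - f xt + (x - xt) ⬝ᵥ (-(Aᵀ.mulVec lamt)) + (lam - lamt) ⬝ᵥ (A.mulVec xt - b)
        ≥ (x - xt) ⬝ᵥ D.mulVec (xk - xt)
          + (1 / β) * ((lam - lamt) ⬝ᵥ (lamk - lamt))
          + σ / 2 * ((xt - x) ⬝ᵥ (xt - x)) := by
  intro x lam
  subst hxt hlamt
  have key := hopt x
  have hβ' : β ≠ 0 := ne_of_gt hβ
  have hlk : lamk - (lamk - β • (A.mulVec xt - b)) = β • (A.mulVec xt - b) := by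
    ext i; simp
  rw [hlk]
  simp only [Matrix.mulVec_sub, Matrix.mulVec_smul, dotProduct_sub, sub_dotProduct,
    dotProduct_smul, smul_dotProduct, dotProduct_neg, neg_dotProduct, dotProduct_add, Matrix.mulVec_mulVec,
    smul_eq_mul] at key ⊢
  field_simp
  linarith [key]
end

section
/- Let A ∈ ℝ^{l×n}, b ∈ ℝ^l, γ ∈ (0, 2], τ ∈ [(2+γ)/4, 1], σ > 0, and r > σ_max(AᵀA). Let β, β⁺ > 0 satisfy β ≤ β⁺ and β(τ r β + σ) ≥ τ r (β⁺)². Let x', x^k, x^{k+1} ∈ ℝⁿ with A x' = b, and λ, λ^k ∈ ℝ^l. Define λ̃ := λ^k − β(A x^{k+1} − b), λ^{k+1} := λ^k − γβ(A x^{k+1} − b), D := τ r β I_n − β AᵀA, H := blockdiag(D, (1/(γβ)) I_l), G := blockdiag(D, ((2 − γ)/β) I_l), and for s > 0 set H₀(s) := blockdiag( s²(τ r I_n + (1 − 2τ) AᵀA), (1/γ) I_l ). Set v^k := (x^k, λ^k), v^{k+1} := (x^{k+1}, λ^{k+1}), ṽ := (x^{k+1}, λ̃), v' := (x', λ). Then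 β( ‖v^{k+1} − v'‖²_H + σ‖x^{k+1} − x'‖² − ‖v^k − v'‖²_H + ‖v^k − ṽ‖²_G ) ≥ ‖v^{k+1} − v'‖²_{H₀(β⁺)} − ‖v^k − v'‖²_{H₀(β)}. -/
open Matrix

/-- `maxEig B` is the largest eigenvalue of `B` (for a symmetric matrix, the
supremum of its eigenvalue set), denoted `σ_max(B)` in the paper. -/
noncomputable def maxEig {m : Type*} [Fintype m] (B : Matrix m m ℝ) : ℝ :=
  sSup {μ : ℝ | ∃ v : m → ℝ, v ≠ 0 ∧ B.mulVec v = μ • v}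

lemma dp_self_nonneg {m : Type*} [Fintype m] (v : m → ℝ) : 0 ≤ v ⬝ᵥ v :=
  Finset.sum_nonneg fun _ _ => mul_self_nonneg _

lemma quad_expand {n : ℕ} {B : Matrix (Fin n) (Fin n) ℝ} (hB : B.IsHermitian)
    (v : Fin n → ℝ) :
    ∃ w : Fin n → ℝ,
      v ⬝ᵥ B *ᵥ v = ∑ i, hB.eigenvalues i * (w i)^2 ∧ v ⬝ᵥ v = ∑ i, (w i)^2 := by
  classical
  set U : Matrix (Fin n) (Fin n) ℝ := (hB.eigenvectorUnitary : Matrix (Fin n) (Fin n) ℝ) with hU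
  have hstar : star U = Uᵀ := by
    rw [Matrix.star_eq_conjTranspose, Matrix.conjTranspose_eq_transpose_of_trivial]
  have hUUt : U * Uᵀ = 1 := by
    have := (Matrix.mem_unitaryGroup_iff).mp hB.eigenvectorUnitary.2
    rwa [hstar] at this
  have hspec : B = U * Matrix.diagonal hB.eigenvalues * Uᵀ := by
    have := hB.spectral_theorem
    rw [Unitary.conjStarAlgAut_apply, ← hU, hstar] at this
    exact this
  refine ⟨Uᵀ *ᵥ v, ?_, ?_⟩
  · calc v ⬝ᵥ B *ᵥ v = v ⬝ᵥ U *ᵥ (Matrix.diagonal hB.eigenvalues *ᵥ (Uᵀ *ᵥ v)) := by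
          conv_lhs => rw [hspec]
          rw [Matrix.mulVec_mulVec, Matrix.mulVec_mulVec]
    _ = (Uᵀ *ᵥ v) ⬝ᵥ (Matrix.diagonal hB.eigenvalues *ᵥ (Uᵀ *ᵥ v)) := by
          rw [Matrix.dotProduct_mulVec, ← Matrix.mulVec_transpose]
    _ = ∑ i, hB.eigenvalues i * ((Uᵀ *ᵥ v) i)^2 := by
          simp only [dotProduct, Matrix.mulVec_diagonal]
          exact Finset.sum_congr rfl fun i _ => by ring
  · calc v ⬝ᵥ v = v ⬝ᵥ ((U * Uᵀ) *ᵥ v) := by rw [hUUt, Matrix.one_mulVec]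
    _ = (Uᵀ *ᵥ v) ⬝ᵥ (Uᵀ *ᵥ v) := by
          rw [← Matrix.mulVec_mulVec, Matrix.dotProduct_mulVec, ← Matrix.mulVec_transpose]
    _ = ∑ i, ((Uᵀ *ᵥ v) i)^2 := by
          simp only [dotProduct]
          exact Finset.sum_congr rfl fun i _ => by ring

lemma rayleigh_le {n : ℕ} {B : Matrix (Fin n) (Fin n) ℝ} (hB : B.IsHermitian)
    {r : ℝ} (hr : maxEig B < r) (v : Fin n → ℝ) :
    v ⬝ᵥ B *ᵥ v ≤ r * (v ⬝ᵥ v) := by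
  classical
  rcases Nat.eq_zero_or_pos n with h0 | hn
  · subst h0
    simp [dotProduct]
  have hne : Nonempty (Fin n) := ⟨⟨0, hn⟩⟩
  set S := {μ : ℝ | ∃ z : Fin n → ℝ, z ≠ 0 ∧ B.mulVec z = μ • z} with hS
  set M := Finset.univ.sup' Finset.univ_nonempty hB.eigenvalues with hM
  have hbdd : BddAbove S := by
    refine ⟨M, fun μ hμ => ?_⟩
    obtain ⟨z, hz, hzeq⟩ := hμ
    obtain ⟨w, hw1, hw2⟩ := quad_expand hB z
    have hzz : 0 < z ⬝ᵥ z := by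
      rcases (dp_self_nonneg z).lt_or_eq with h | h
      · exact h
      · exact absurd (dotProduct_self_eq_zero.mp h.symm) hz
    have h1 : μ * (z ⬝ᵥ z) = z ⬝ᵥ B *ᵥ z := by
      rw [hzeq, dotProduct_smul, smul_eq_mul]
    have h2 : z ⬝ᵥ B *ᵥ z ≤ M * (z ⬝ᵥ z) := by
      rw [hw1, hw2, Finset.mul_sum]
      exact Finset.sum_le_sum fun i _ => mul_le_mul_of_nonneg_right
        (Finset.le_sup' _ (Finset.mem_univ i)) (sq_nonneg _)
    have := h1.trans_le h2
    exact le_of_mul_le_mul_right this hzz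
  have heig : ∀ i, hB.eigenvalues i ≤ r := by
    intro i
    have hmem : hB.eigenvalues i ∈ S :=
      ⟨hB.eigenvectorBasis i, (WithLp.ofLp_eq_zero 2).not.mpr (hB.eigenvectorBasis.orthonormal.ne_zero i),
        hB.mulVec_eigenvectorBasis i⟩
    exact le_of_lt (lt_of_le_of_lt (le_csSup hbdd hmem) hr)
  obtain ⟨w, hw1, hw2⟩ := quad_expand hB v
  rw [hw1, hw2, Finset.mul_sum]
  exact Finset.sum_le_sum fun i _ => mul_le_mul_of_nonneg_right (heig i) (sq_nonneg _)

lemma scalar_key (γ τ σ r β βp a s W P T Q m2 me : ℝ)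
    (hγ0 : 0 < γ) (hτ1 : (2+γ)/4 ≤ τ) (hτ2 : τ ≤ 1)
    (hβ : 0 < β) (hβp : 0 < βp) (hle : β ≤ βp)
    (hgrow : β*(τ*r*β+σ) ≥ τ*r*βp^2)
    (ha : 0 ≤ a) (hP : 0 ≤ P)
    (hQW : Q ≤ r * W) (hsq : 0 ≤ 4*P + 4*T + Q) :
    β * (((τ*r*β)*a + (-β)*P + (1/(γ*β))*(m2 - 2*(γ*β)*me + (γ*β)^2*P))
        + σ*a
        - ((τ*r*β)*(W + 2*s + a) + (-β)*(Q + 2*T + P) + (1/(γ*β))*m2)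
        + ((τ*r*β)*W + (-β)*Q + ((2-γ)/β)*(β^2*P)))
      ≥ ((βp^2*(τ*r))*a + (βp^2*(1-2*τ))*P + (1/γ)*(m2 - 2*(γ*β)*me + (γ*β)^2*P))
        - ((β^2*(τ*r))*(W+2*s+a) + (β^2*(1-2*τ))*(Q+2*T+P) + (1/γ)*m2) := by
  have ht1 : 0 ≤ (β*σ + τ*r*(β^2 - βp^2)) * a :=
    mul_nonneg (by nlinarith [hgrow]) ha
  have ht2 : 0 ≤ (βp^2 - β^2)*(2*τ - 1)*P :=
    mul_nonneg (mul_nonneg (by nlinarith) (by linarith)) hP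
  have ht3 : 0 ≤ β^2*(1-τ)*(4*P+4*T+Q) :=
    mul_nonneg (mul_nonneg (sq_nonneg β) (by linarith)) hsq
  have ht4 : 0 ≤ β^2*(4*τ-2-γ)*P :=
    mul_nonneg (mul_nonneg (sq_nonneg β) (by linarith)) hP
  have ht5 : 0 ≤ β^2*τ*(r*W - Q) :=
    mul_nonneg (mul_nonneg (sq_nonneg β) (by linarith)) (by linarith)
  have e : β * (((τ*r*β)*a + (-β)*P + (1/(γ*β))*(m2 - 2*(γ*β)*me + (γ*β)^2*P))
        + σ*a
        - ((τ*r*β)*(W + 2*s + a) + (-β)*(Q + 2*T + P) + (1/(γ*β))*m2)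
        + ((τ*r*β)*W + (-β)*Q + ((2-γ)/β)*(β^2*P)))
      - (((βp^2*(τ*r))*a + (βp^2*(1-2*τ))*P + (1/γ)*(m2 - 2*(γ*β)*me + (γ*β)^2*P))
        - ((β^2*(τ*r))*(W+2*s+a) + (β^2*(1-2*τ))*(Q+2*T+P) + (1/γ)*m2))
      = (β*σ + τ*r*(β^2 - βp^2))*a + (βp^2 - β^2)*(2*τ-1)*P
        + β^2*(1-τ)*(4*P+4*T+Q) + β^2*(4*τ-2-γ)*P + β^2*τ*(r*W-Q) := by
    field_simp
    ring
  linarith [e, ht1, ht2, ht3, ht4, ht5]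

lemma sum_elim_sub {n l : Type*} (a c : n → ℝ) (b d : l → ℝ) :
    Sum.elim a b - Sum.elim c d = Sum.elim (a - c) (b - d) := by
  funext x; cases x <;> simp

lemma dp_AtA {n l : ℕ} (A : Matrix (Fin l) (Fin n) ℝ) (z : Fin n → ℝ) :
    z ⬝ᵥ (Aᵀ * A) *ᵥ z = (A *ᵥ z) ⬝ᵥ (A *ᵥ z) := by
  rw [← Matrix.mulVec_mulVec, Matrix.dotProduct_mulVec, Matrix.vecMul_transpose]

lemma qf_blocks {n l : ℕ} (A : Matrix (Fin l) (Fin n) ℝ) (c d g : ℝ)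
    (z : Fin n → ℝ) (y : Fin l → ℝ) :
    qf (Matrix.fromBlocks (c • (1 : Matrix (Fin n) (Fin n) ℝ) + d • (Aᵀ * A)) 0 0
        (g • (1 : Matrix (Fin l) (Fin l) ℝ))) (Sum.elim z y)
      = c * (z ⬝ᵥ z) + d * ((A *ᵥ z) ⬝ᵥ (A *ᵥ z)) + g * (y ⬝ᵥ y) := by
  unfold qf
  rw [Matrix.fromBlocks_mulVec]
  simp only [Matrix.zero_mulVec, add_zero, zero_add, Sum.elim_comp_inl, Sum.elim_comp_inr]
  rw [sumElim_dotProduct_sumElim, Matrix.add_mulVec, Matrix.smul_mulVec,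
    Matrix.smul_mulVec, Matrix.smul_mulVec, Matrix.one_mulVec, Matrix.one_mulVec,
    dotProduct_add, dotProduct_smul, dotProduct_smul,
    dotProduct_smul, smul_eq_mul, smul_eq_mul, smul_eq_mul, dp_AtA]

lemma dp_add_sq {m : Type*} [Fintype m] (x y : m → ℝ) :
    (x + y) ⬝ᵥ (x + y) = x ⬝ᵥ x + 2*(y ⬝ᵥ x) + y ⬝ᵥ y := by
  simp only [dotProduct_add, add_dotProduct, dotProduct_comm x y]
  ring

lemma dp_sub_smul_sq {m : Type*} [Fintype m] (x y : m → ℝ) (c : ℝ) :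
    (x - c • y) ⬝ᵥ (x - c • y) = x ⬝ᵥ x - 2*c*(x ⬝ᵥ y) + c^2*(y ⬝ᵥ y) := by
  simp only [dotProduct_sub, sub_dotProduct, dotProduct_smul,
    smul_dotProduct, smul_eq_mul, dotProduct_comm y x]
  ring

lemma dp_smul_sq {m : Type*} [Fintype m] (y : m → ℝ) (c : ℝ) :
    (c • y) ⬝ᵥ (c • y) = c^2*(y ⬝ᵥ y) := by
  simp only [dotProduct_smul, smul_dotProduct, smul_eq_mul]
  ring

/-- Theorem 3.2: one step of GPALM with the possibly indefinite proximal matrix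
`D = τrβI - βAᵀA` applied to a `σ`-strongly convex objective satisfies the
additional convergence condition (CC3) with `rᵏ = β`, `Θᵏ = 0` and
`H₀(s) = blockdiag(s²(τrI + (1-2τ)AᵀA), (1/γ)I)`, provided `β(τrβ+σ) ≥ τr(β⁺)²`
and `β ≤ β⁺`. -/
theorem stmt6 {n l : ℕ}
    (A : Matrix (Fin l) (Fin n) ℝ) (b : Fin l → ℝ)
    (γ τ σ r : ℝ) (hγ : γ ∈ Set.Ioc (0 : ℝ) 2)
    (hτ : τ ∈ Set.Icc ((2 + γ) / 4) 1) (hσ : 0 < σ)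
    (hr : maxEig (Aᵀ * A) < r)
    (β βp : ℝ) (hβ : 0 < β) (hβp : 0 < βp) (hle : β ≤ βp)
    (hgrow : β * (τ * r * β + σ) ≥ τ * r * βp ^ 2)
    (x' xk xkk : Fin n → ℝ) (hx' : A.mulVec x' = b)
    (lam lamk lamt lamkk : Fin l → ℝ)
    (hlamt : lamt = lamk - β • (A.mulVec xkk - b))
    (hlamkk : lamkk = lamk - (γ * β) • (A.mulVec xkk - b))
    (D : Matrix (Fin n) (Fin n) ℝ)
    (hD : D = (τ * r * β) • 1 - β • (Aᵀ * A))
    (H G : Matrix (Fin n ⊕ Fin l) (Fin n ⊕ Fin l) ℝ)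
    (hH : H = Matrix.fromBlocks D 0 0 ((1 / (γ * β)) • 1))
    (hG : G = Matrix.fromBlocks D 0 0 (((2 - γ) / β) • 1))
    (H₀ : ℝ → Matrix (Fin n ⊕ Fin l) (Fin n ⊕ Fin l) ℝ)
    (hH₀ : ∀ s, H₀ s =
      Matrix.fromBlocks (s ^ 2 • ((τ * r) • 1 + (1 - 2 * τ) • (Aᵀ * A))) 0 0 ((1 / γ) • 1)) :
    β * (qf H (Sum.elim xkk lamkk - Sum.elim x' lam)
        + σ * ((xkk - x') ⬝ᵥ (xkk - x'))
        - qf H (Sum.elim xk lamk - Sum.elim x' lam)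
        + qf G (Sum.elim xk lamk - Sum.elim xkk lamt))
      ≥ qf (H₀ βp) (Sum.elim xkk lamkk - Sum.elim x' lam)
        - qf (H₀ β) (Sum.elim xk lamk - Sum.elim x' lam) := by
  obtain ⟨hγ0, hγ2⟩ := hγ
  obtain ⟨hτ1, hτ2⟩ := hτ
  have hAtA : (Aᵀ * A).IsHermitian := by
    have := Matrix.isHermitian_conjTranspose_mul_self A
    rwa [Matrix.conjTranspose_eq_transpose_of_trivial] at this
  -- expansion of the quadratic forms
  have hHq : ∀ (z : Fin n → ℝ) (y : Fin l → ℝ), qf H (Sum.elim z y)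
      = (τ*r*β) * (z ⬝ᵥ z) + (-β) * ((A *ᵥ z) ⬝ᵥ (A *ᵥ z)) + (1/(γ*β)) * (y ⬝ᵥ y) := by
    intro z y
    rw [hH, hD, show (τ*r*β) • (1 : Matrix (Fin n) (Fin n) ℝ) - β • (Aᵀ*A)
        = (τ*r*β) • 1 + (-β) • (Aᵀ*A) by rw [neg_smul, ← sub_eq_add_neg]]
    exact qf_blocks A (τ*r*β) (-β) (1/(γ*β)) z y
  have hGq : ∀ (z : Fin n → ℝ) (y : Fin l → ℝ), qf G (Sum.elim z y)
      = (τ*r*β) * (z ⬝ᵥ z) + (-β) * ((A *ᵥ z) ⬝ᵥ (A *ᵥ z)) + ((2-γ)/β) * (y ⬝ᵥ y) := by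
    intro z y
    rw [hG, hD, show (τ*r*β) • (1 : Matrix (Fin n) (Fin n) ℝ) - β • (Aᵀ*A)
        = (τ*r*β) • 1 + (-β) • (Aᵀ*A) by rw [neg_smul, ← sub_eq_add_neg]]
    exact qf_blocks A (τ*r*β) (-β) ((2-γ)/β) z y
  have hH0q : ∀ (t : ℝ) (z : Fin n → ℝ) (y : Fin l → ℝ), qf (H₀ t) (Sum.elim z y)
      = (t^2*(τ*r)) * (z ⬝ᵥ z) + (t^2*(1-2*τ)) * ((A *ᵥ z) ⬝ᵥ (A *ᵥ z)) + (1/γ) * (y ⬝ᵥ y) := by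
    intro t z y
    rw [hH₀ t, show t^2 • ((τ*r) • (1 : Matrix (Fin n) (Fin n) ℝ) + (1-2*τ) • (Aᵀ*A))
        = (t^2*(τ*r)) • 1 + (t^2*(1-2*τ)) • (Aᵀ*A) by rw [smul_add, smul_smul, smul_smul]]
    exact qf_blocks A (t^2*(τ*r)) (t^2*(1-2*τ)) (1/γ) z y
  -- vector identities
  have he : A *ᵥ xkk - b = A *ᵥ (xkk - x') := by rw [Matrix.mulVec_sub, hx']
  have hlam1 : lamkk - lam = (lamk - lam) - (γ*β) • (A *ᵥ (xkk - x')) := by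
    rw [hlamkk, he, sub_right_comm]
  have hlam2 : lamk - lamt = β • (A *ᵥ (xkk - x')) := by
    rw [hlamt, he, sub_sub_cancel]
  have hkx : xk - x' = (xk - xkk) + (xkk - x') := (sub_add_sub_cancel xk xkk x').symm
  rw [sum_elim_sub xkk x' lamkk lam, sum_elim_sub xk x' lamk lam,
    sum_elim_sub xk xkk lamk lamt, hlam1, hlam2, hkx]
  rw [hHq, hHq, hGq, hH0q, hH0q, Matrix.mulVec_add]
  -- expand compound dot products
  have d1 := dp_add_sq (xk - xkk) (xkk - x')
  have d2 := dp_add_sq (A *ᵥ (xk - xkk)) (A *ᵥ (xkk - x'))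
  have d3 := dp_sub_smul_sq (lamk - lam) (A *ᵥ (xkk - x')) (γ*β)
  have d4 := dp_smul_sq (A *ᵥ (xkk - x')) β
  rw [d1, d2, d3, d4]
  -- auxiliary nonnegativity facts
  have hQW : ((A *ᵥ (xk - xkk)) ⬝ᵥ (A *ᵥ (xk - xkk))) ≤ r * ((xk - xkk) ⬝ᵥ (xk - xkk)) := by
    have h := rayleigh_le hAtA hr (xk - xkk)
    rwa [dp_AtA] at h
  have hsq : 0 ≤ 4*((A *ᵥ (xkk - x')) ⬝ᵥ (A *ᵥ (xkk - x')))
      + 4*((A *ᵥ (xkk - x')) ⬝ᵥ (A *ᵥ (xk - xkk)))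
      + ((A *ᵥ (xk - xkk)) ⬝ᵥ (A *ᵥ (xk - xkk))) := by
    have h := dp_self_nonneg ((2:ℝ) • (A *ᵥ (xkk - x')) + A *ᵥ (xk - xkk))
    simp only [dotProduct_add, add_dotProduct, dotProduct_smul,
      smul_dotProduct, smul_eq_mul,
      dotProduct_comm (A *ᵥ (xk - xkk)) (A *ᵥ (xkk - x'))] at h
    linarith
  exact scalar_key γ τ σ r β βp
    ((xkk - x') ⬝ᵥ (xkk - x')) ((xkk - x') ⬝ᵥ (xk - xkk))
    ((xk - xkk) ⬝ᵥ (xk - xkk))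
    ((A *ᵥ (xkk - x')) ⬝ᵥ (A *ᵥ (xkk - x')))
    ((A *ᵥ (xkk - x')) ⬝ᵥ (A *ᵥ (xk - xkk)))
    ((A *ᵥ (xk - xkk)) ⬝ᵥ (A *ᵥ (xk - xkk)))
    ((lamk - lam) ⬝ᵥ (lamk - lam)) ((lamk - lam) ⬝ᵥ (A *ᵥ (xkk - x')))
    hγ0 hτ1 hτ2 hβ hβp hle hgrow
    (dp_self_nonneg _) (dp_self_nonneg _) hQW hsq
end

section
/- Let f₂ : ℝ^{n₂} → ℝ, σ ≥ 0, A₁ ∈ ℝ^{l×n₁}, A₂ ∈ ℝ^{l×n₂} with A₂ ≠ 0, b ∈ ℝ^l, γ ∈ ℝ, and β, β⁻ > 0. Let x₁^k, x₁^{k+1} ∈ ℝ^{n₁}, x₂^k, x₂^{k+1} ∈ ℝ^{n₂}, λ^{k−1}, λ^k ∈ ℝ^l, and write e₀ := A₁x₁^k + A₂x₂^k − b, e := A₁x₁^{k+1} + A₂x₂^{k+1} − b, Δ := x₂^k − x₂^{k+1}. Assume: (i) for all x₂ ∈ ℝ^{n₂}: f₂(x₂) − f₂(x₂^{k+1}) +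 (x₂ − x₂^{k+1})ᵀ[ −A₂ᵀλ^k + β A₂ᵀ e ] ≥ (σ/2)‖x₂^{k+1} − x₂‖²; (ii) for all x₂ ∈ ℝ^{n₂}: f₂(x₂) − f₂(x₂^k) + (x₂ − x₂^k)ᵀ[ −A₂ᵀλ^{k−1} + β⁻ A₂ᵀ e₀ ] ≥ (σ/2)‖x₂^k − x₂‖²; (iii) λ^k = λ^{k−1} − γ β⁻ e₀. Then β Δᵀ A₂ᵀ e ≥ (1 − γ) β⁻ Δᵀ A₂ᵀ e₀ + ( σ / σ_max(A₂ᵀA₂) ) ‖A₂ Δ‖². -/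
open Matrix

lemma maxEig_key {l n : ℕ} (A : Matrix (Fin l) (Fin n) ℝ) (hA : A ≠ 0) :
    0 < maxEig (Aᵀ * A) ∧
      ∀ v : Fin n → ℝ, (A.mulVec v) ⬝ᵥ (A.mulVec v) ≤ maxEig (Aᵀ * A) * (v ⬝ᵥ v) := by
  classical
  set B : Matrix (Fin n) (Fin n) ℝ := Aᵀ * A with hBdef
  have hBH : B.IsHermitian := by
    simpa [Matrix.conjTranspose_eq_transpose_of_trivial] using
      Matrix.isHermitian_conjTranspose_mul_self A
  have hBT : Bᵀ = B := by
    exact (show B.IsSymm by simpa [Matrix.conjTranspose_eq_transpose_of_trivial] using hBH).eq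
  have hquad : ∀ v : Fin n → ℝ, v ⬝ᵥ B.mulVec v = (A.mulVec v) ⬝ᵥ (A.mulVec v) := by
    intro v
    rw [hBdef, ← Matrix.mulVec_mulVec, Matrix.dotProduct_mulVec, Matrix.vecMul_transpose]
  have hvm : ∀ x : Fin n → ℝ, x ᵥ* B = B *ᵥ x := by
    intro x
    calc x ᵥ* B = x ᵥ* Bᵀᵀ := by rw [Matrix.transpose_transpose]
      _ = Bᵀ *ᵥ x := Matrix.vecMul_transpose _ _
      _ = B *ᵥ x := by rw [hBT]
  have hsymmdot : ∀ x y : Fin n → ℝ, x ⬝ᵥ B.mulVec y = (B.mulVec x) ⬝ᵥ y := by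
    intro x y
    rw [Matrix.dotProduct_mulVec, hvm]
  have hsum : ∀ (f : Fin n → Fin n → ℝ) (w : Fin n → ℝ),
      (∑ i, f i) ⬝ᵥ w = ∑ i, f i ⬝ᵥ w := by
    intro f w
    simp only [dotProduct, Finset.sum_apply, Finset.sum_mul]
    exact Finset.sum_comm
  set S : Set ℝ := {μ : ℝ | ∃ v : Fin n → ℝ, v ≠ 0 ∧ B.mulVec v = μ • v} with hSdef
  have hmaxeig : maxEig B = sSup S := rfl
  set bb := hBH.eigenvectorBasis with hbb
  set lam := hBH.eigenvalues with hlam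
  set u : Fin n → Fin n → ℝ := fun i => ⇑(bb i) with hu
  have heig : ∀ i, B.mulVec (u i) = lam i • u i := fun i => hBH.mulVec_eigenvectorBasis i
  have hinner : ∀ (x y : EuclideanSpace ℝ (Fin n)), @inner ℝ _ _ x y = (⇑x : Fin n → ℝ) ⬝ᵥ ⇑y := by
    intro x y
    simp [PiLp.inner_apply, RCLike.inner_apply, dotProduct, mul_comm]
  have hpars : ∀ v : Fin n → ℝ, ∑ i, (u i ⬝ᵥ v) • u i = v := by
    intro v
    have := bb.sum_repr' (WithLp.toLp 2 v)
    calc ∑ i, (u i ⬝ᵥ v) • u i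
        = ⇑(∑ i, (@inner ℝ _ _ (bb i) (WithLp.toLp 2 v)) • bb i) := by
          simp only [WithLp.ofLp_sum, WithLp.ofLp_smul, hinner]
          rfl
      _ = v := by rw [this]
  -- S ⊆ range of eigenvalues
  have hS_sub : ∀ μ ∈ S, ∃ i, μ = lam i := by
    rintro μ ⟨x, hx0, hx⟩
    have hex : ∃ i, u i ⬝ᵥ x ≠ 0 := by
      by_contra h
      push_neg at h
      apply hx0
      rw [← hpars x]
      simp [h]
    obtain ⟨i, hi⟩ := hex
    have h1 : u i ⬝ᵥ B.mulVec x = lam i * (u i ⬝ᵥ x) := by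
      rw [hsymmdot, heig, smul_dotProduct, smul_eq_mul]
    have h2 : u i ⬝ᵥ B.mulVec x = μ * (u i ⬝ᵥ x) := by
      rw [hx, dotProduct_smul, smul_eq_mul]
    exact ⟨i, (mul_right_cancel₀ hi (h1.symm.trans h2)).symm⟩
  have hu_ne : ∀ i, u i ≠ 0 := by
    intro i h
    exact bb.orthonormal.ne_zero i (by ext j; exact congrFun h j)
  have hmem : ∀ i, lam i ∈ S := fun i => ⟨u i, hu_ne i, heig i⟩
  have hbdd : BddAbove S := by
    apply (Set.finite_range lam).bddAbove.mono
    rintro μ hμ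
    obtain ⟨i, rfl⟩ := hS_sub μ hμ
    exact Set.mem_range_self i
  have hle : ∀ i, lam i ≤ maxEig B := fun i => le_csSup hbdd (hmem i)
  -- positivity
  have hBne : B ≠ 0 := by
    intro h
    apply hA
    ext j k
    have h1 : (A.mulVec (Pi.single k 1)) ⬝ᵥ (A.mulVec (Pi.single k 1)) = 0 := by
      rw [← hquad, h]; simp
    have h2 : A.mulVec (Pi.single k 1) = 0 := dotProduct_self_eq_zero.mp h1
    have h3 := congrFun h2 j
    simpa [Matrix.mulVec_single] using h3
  obtain ⟨x, t, ht0, hx0, hxe⟩ := hBH.exists_eigenvector_of_ne_zero hBne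
  have htS : t ∈ S := ⟨x, hx0, by simpa using hxe⟩
  have hxx : 0 < x ⬝ᵥ x := by
    rcases lt_or_eq_of_le (Finset.sum_nonneg fun i _ => mul_self_nonneg (x i) :
      (0:ℝ) ≤ x ⬝ᵥ x) with h | h
    · exact h
    · exact absurd (dotProduct_self_eq_zero.mp h.symm) hx0
  have htpos : 0 < t := by
    have h1 : x ⬝ᵥ B.mulVec x = t * (x ⬝ᵥ x) := by
      rw [show B.mulVec x = t • x by simpa using hxe, dotProduct_smul, smul_eq_mul]
    have h2 : 0 ≤ x ⬝ᵥ B.mulVec x := by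
      rw [hquad]
      exact Finset.sum_nonneg fun i _ => mul_self_nonneg _
    rcases ht0.lt_or_gt with h | h
    · nlinarith
    · exact h
  have hMpos : 0 < maxEig B := lt_of_lt_of_le htpos (le_csSup hbdd htS)
  refine ⟨hMpos, fun v => ?_⟩
  set c : Fin n → ℝ := fun i => u i ⬝ᵥ v with hc
  have hv : ∑ i, c i • u i = v := hpars v
  have hBv : v ⬝ᵥ B.mulVec v = ∑ i, lam i * (c i * c i) := by
    nth_rewrite 1 [← hv]
    rw [hsum]
    refine Finset.sum_congr rfl fun i _ => ?_
    rw [smul_dotProduct, smul_eq_mul, hsymmdot, heig, smul_dotProduct,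
      smul_eq_mul]
    ring
  have hvv : v ⬝ᵥ v = ∑ i, c i * c i := by
    nth_rewrite 1 [← hv]
    rw [hsum]
    refine Finset.sum_congr rfl fun i _ => ?_
    rw [smul_dotProduct, smul_eq_mul]
  rw [← hquad, hBv, hvv, Finset.mul_sum]
  exact Finset.sum_le_sum fun i _ =>
    mul_le_mul_of_nonneg_right (hle i) (mul_self_nonneg _)

/-- Inequality (3.26) for ADMM on the two-block problem (P2): from the
first-order optimality inequalities of the `x₂`-subproblem at two consecutive
iterations and the dual update `λᵏ = λ^{k-1} - γβ⁻e₀`, one gets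
`βΔᵀA₂ᵀe ≥ (1-γ)β⁻ΔᵀA₂ᵀe₀ + (σ/σ_max(A₂ᵀA₂))‖A₂Δ‖²` where `Δ = x₂ᵏ - x₂^{k+1}`. -/
theorem stmt11 {n₁ n₂ l : ℕ}
    (f₂ : (Fin n₂ → ℝ) → ℝ) (σ : ℝ) (hσ : 0 ≤ σ)
    (A₁ : Matrix (Fin l) (Fin n₁) ℝ) (A₂ : Matrix (Fin l) (Fin n₂) ℝ)
    (hA₂ : A₂ ≠ 0) (b : Fin l → ℝ)
    (γ β βm : ℝ) (hβ : 0 < β) (hβm : 0 < βm)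
    (x1k x1kk : Fin n₁ → ℝ) (x2k x2kk : Fin n₂ → ℝ)
    (lamkm lamk : Fin l → ℝ)
    (e₀ e : Fin l → ℝ)
    (he₀ : e₀ = A₁.mulVec x1k + A₂.mulVec x2k - b)
    (he : e = A₁.mulVec x1kk + A₂.mulVec x2kk - b)
    (hi : ∀ x₂ : Fin n₂ → ℝ,
      f₂ x₂ - f₂ x2kk + (x₂ - x2kk) ⬝ᵥ (-(A₂ᵀ.mulVec lamk) + β • A₂ᵀ.mulVec e)
        ≥ σ / 2 * ((x2kk - x₂) ⬝ᵥ (x2kk - x₂)))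
    (hii : ∀ x₂ : Fin n₂ → ℝ,
      f₂ x₂ - f₂ x2k + (x₂ - x2k) ⬝ᵥ (-(A₂ᵀ.mulVec lamkm) + βm • A₂ᵀ.mulVec e₀)
        ≥ σ / 2 * ((x2k - x₂) ⬝ᵥ (x2k - x₂)))
    (hiii : lamk = lamkm - (γ * βm) • e₀) :
    β * ((x2k - x2kk) ⬝ᵥ A₂ᵀ.mulVec e)
      ≥ (1 - γ) * βm * ((x2k - x2kk) ⬝ᵥ A₂ᵀ.mulVec e₀)
        + (σ / maxEig (A₂ᵀ * A₂)) *
            (A₂.mulVec (x2k - x2kk) ⬝ᵥ A₂.mulVec (x2k - x2kk)) := by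
  obtain ⟨hMpos, hray⟩ := maxEig_key A₂ hA₂
  have h1 := hi x2k
  have h2 := hii x2kk
  have hcomm : x2k ⬝ᵥ x2kk = x2kk ⬝ᵥ x2k := dotProduct_comm _ _
  have key : β * ((x2k - x2kk) ⬝ᵥ A₂ᵀ.mulVec e)
      ≥ (1 - γ) * βm * ((x2k - x2kk) ⬝ᵥ A₂ᵀ.mulVec e₀)
        + σ * ((x2k - x2kk) ⬝ᵥ (x2k - x2kk)) := by
    simp only [hiii, Matrix.mulVec_sub, Matrix.mulVec_smul, sub_dotProduct,
      dotProduct_sub, dotProduct_add, add_dotProduct,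
      dotProduct_neg, neg_dotProduct, dotProduct_smul,
      smul_dotProduct, smul_eq_mul] at h1 h2 ⊢
    nlinarith [h1, h2, hcomm]
  have hray2 := hray (x2k - x2kk)
  have h4 : (σ / maxEig (A₂ᵀ * A₂)) * (A₂.mulVec (x2k - x2kk) ⬝ᵥ A₂.mulVec (x2k - x2kk))
      ≤ σ * ((x2k - x2kk) ⬝ᵥ (x2k - x2kk)) := by
    have h5 : (σ / maxEig (A₂ᵀ * A₂)) * (A₂.mulVec (x2k - x2kk) ⬝ᵥ A₂.mulVec (x2k - x2kk))
        ≤ (σ / maxEig (A₂ᵀ * A₂)) * (maxEig (A₂ᵀ * A₂) * ((x2k - x2kk) ⬝ᵥ (x2k - x2kk))) :=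
      mul_le_mul_of_nonneg_left hray2 (div_nonneg hσ hMpos.le)
    have h6 : (σ / maxEig (A₂ᵀ * A₂)) * (maxEig (A₂ᵀ * A₂) * ((x2k - x2kk) ⬝ᵥ (x2k - x2kk)))
        = σ * ((x2k - x2kk) ⬝ᵥ (x2k - x2kk)) := by
      field_simp
    linarith [h5, h6.le, h6.ge]
  linarith [key, h4]
end

section
/- Let A₁ ∈ ℝ^{l×n₁}, A₂ ∈ ℝ^{l×n₂}, b ∈ ℝ^l, γ ∈ (0, (1+√5)/2], σ' ≥ 0, and 0 < β⁻ ≤ β with β³/(β + σ') ≤ (β⁻)². Let x₁^{k+1} ∈ ℝ^{n₁}, x₂^k, x₂^{k+1} ∈ ℝ^{n₂}, λ^k ∈ ℝ^l; write Δ := x₂^k − x₂^{k+1}, e := A₁x₁^{k+1} + A₂x₂^{k+1} − b, and let e₀ ∈ ℝ^l. Define λ̃ := λ^k − β(A₁x₁^{k+1} + A₂x₂^k − b), v^k := (x₂^k, λ^k), ṽ := (x₂^{k+1}, λ̃), and G := [ (1−γ) β A₂ᵀA₂, −(1−γ) A₂ᵀ ; −(1−γ) A₂, ((2−γ)/β)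 I_l ]. If β Δᵀ A₂ᵀ e ≥ (1 − γ) β⁻ Δᵀ A₂ᵀ e₀ + σ' ‖A₂ Δ‖², then β ‖v^k − ṽ‖²_G ≥ (1 − γ)² [ β² ‖e‖² − (β⁻)² ‖e₀‖² ]. -/
open Matrix

/-- The key estimate (3.30) in the proof of Theorem 3.3: for
`γ ∈ (0, (1+√5)/2]`, `σ' ≥ 0`, `0 < β⁻ ≤ β` with `β³/(β+σ') ≤ (β⁻)²`, if
`βΔᵀA₂ᵀe ≥ (1-γ)β⁻ΔᵀA₂ᵀe₀ + σ'‖A₂Δ‖²`, then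
`β‖vᵏ - ṽ‖²_G ≥ (1-γ)²[β²‖e‖² - (β⁻)²‖e₀‖²]`. -/
theorem stmt12 {n₁ n₂ l : ℕ}
    (A₁ : Matrix (Fin l) (Fin n₁) ℝ) (A₂ : Matrix (Fin l) (Fin n₂) ℝ) (b : Fin l → ℝ)
    (γ : ℝ) (hγ : γ ∈ Set.Ioc (0 : ℝ) ((1 + Real.sqrt 5) / 2))
    (σ' : ℝ) (hσ' : 0 ≤ σ')
    (βm β : ℝ) (hβm : 0 < βm) (hle : βm ≤ β)
    (hstep : β ^ 3 / (β + σ') ≤ βm ^ 2)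
    (x1kk : Fin n₁ → ℝ) (x2k x2kk : Fin n₂ → ℝ) (lamk : Fin l → ℝ)
    (e e₀ : Fin l → ℝ)
    (he : e = A₁.mulVec x1kk + A₂.mulVec x2kk - b)
    (lamt : Fin l → ℝ)
    (hlamt : lamt = lamk - β • (A₁.mulVec x1kk + A₂.mulVec x2k - b))
    (G : Matrix (Fin n₂ ⊕ Fin l) (Fin n₂ ⊕ Fin l) ℝ)
    (hG : G = Matrix.fromBlocks (((1 - γ) * β) • (A₂ᵀ * A₂)) (-((1 - γ) • A₂ᵀ))
        (-((1 - γ) • A₂)) (((2 - γ) / β) • 1))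
    (hyp : β * ((x2k - x2kk) ⬝ᵥ A₂ᵀ.mulVec e)
      ≥ (1 - γ) * βm * ((x2k - x2kk) ⬝ᵥ A₂ᵀ.mulVec e₀)
        + σ' * (A₂.mulVec (x2k - x2kk) ⬝ᵥ A₂.mulVec (x2k - x2kk))) :
    β * qf G (Sum.elim x2k lamk - Sum.elim x2kk lamt)
      ≥ (1 - γ) ^ 2 * (β ^ 2 * (e ⬝ᵥ e) - βm ^ 2 * (e₀ ⬝ᵥ e₀)) := by
  obtain ⟨hγ0, hγ2⟩ := hγ
  have hβ : 0 < β := lt_of_lt_of_le hβm hle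
  set Δ : Fin n₂ → ℝ := x2k - x2kk with hΔ
  set u : Fin l → ℝ := A₂.mulVec Δ with hu
  have key : ∀ x : Fin l → ℝ, Δ ⬝ᵥ A₂ᵀ.mulVec x = u ⬝ᵥ x := fun x => by
    rw [dotProduct_mulVec, vecMul_transpose]
  -- rewrite the argument vector
  have hw : Sum.elim x2k lamk - Sum.elim x2kk lamt = Sum.elim Δ (β • (u + e)) := by
    have hacc : A₁.mulVec x1kk + A₂.mulVec x2k - b = u + e := by
      rw [he, hu, hΔ, Matrix.mulVec_sub]; abel
    have hd : lamk - lamt = β • (u + e) := by rw [hlamt, hacc, sub_sub_cancel]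
    rw [← hd, hΔ]; ext (i|i) <;> simp
  -- compute the quadratic form
  have hqf : β * qf G (Sum.elim x2k lamk - Sum.elim x2kk lamt)
      = β ^ 2 * ((u ⬝ᵥ u) + 2 * (u ⬝ᵥ e) + (2 - γ) * (e ⬝ᵥ e)) := by
    rw [hw]
    simp only [qf, hG, fromBlocks_mulVec, Sum.elim_comp_inl, Sum.elim_comp_inr,
      sumElim_dotProduct_sumElim, smul_mulVec, neg_mulVec, one_mulVec,
      mulVec_smul, mulVec_add, ← mulVec_mulVec, dotProduct_add, add_dotProduct,
      dotProduct_smul, smul_dotProduct, dotProduct_neg, neg_dotProduct, key,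
      smul_eq_mul, dotProduct_comm e u, ← hu]
    field_simp
    ring
  rw [hqf]
  -- scalar abbreviations
  set p := u ⬝ᵥ u with hp
  set q := u ⬝ᵥ e with hq
  set r := u ⬝ᵥ e₀ with hr
  set s := e ⬝ᵥ e with hs
  set t := e₀ ⬝ᵥ e₀ with ht
  have hyp' : β * q ≥ (1 - γ) * βm * r + σ' * p := by
    rw [hq, hr, hp, ← key e, ← key e₀]; exact hyp
  have hpn : 0 ≤ p := Finset.sum_nonneg fun i _ => mul_self_nonneg _
  have hsn : 0 ≤ s := Finset.sum_nonneg fun i _ => mul_self_nonneg _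
  have htn : 0 ≤ t := Finset.sum_nonneg fun i _ => mul_self_nonneg _
  -- γ² - γ - 1 ≤ 0
  have hγq : γ ^ 2 - γ - 1 ≤ 0 := by
    have h5 : Real.sqrt 5 ^ 2 = 5 := Real.sq_sqrt (by norm_num)
    nlinarith [Real.sqrt_nonneg 5, mul_nonneg (by linarith : (0:ℝ) ≤ (1 + Real.sqrt 5) / 2 - γ)
      (by nlinarith [Real.sqrt_nonneg 5] : (0:ℝ) ≤ γ - (1 - Real.sqrt 5) / 2)]
  -- the Cauchy–Schwarz positivity fact, via a dot product square
  have hzn : ∀ a c : ℝ, 0 ≤ a ^ 2 * p + 2 * (a * c) * r + c ^ 2 * t := by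
    intro a c
    have h0 : (0:ℝ) ≤ (a • u + c • e₀) ⬝ᵥ (a • u + c • e₀) :=
      Finset.sum_nonneg fun i _ => mul_self_nonneg _
    have heq : (a • u + c • e₀) ⬝ᵥ (a • u + c • e₀)
        = a ^ 2 * p + 2 * (a * c) * r + c ^ 2 * t := by
      simp only [dotProduct_add, add_dotProduct, dotProduct_smul, smul_dotProduct,
        smul_eq_mul, ← hp, ← hr, ← ht, dotProduct_comm e₀ u]
      ring
    linarith [heq ▸ h0]
  have hzn' := hzn (β * (β + 2 * σ')) ((1 - γ) * βm * β)
  have hapos : 0 < β * (β + 2 * σ') := by positivity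
  have hA : 0 ≤ (β * (β + 2 * σ')) * p + 2 * ((1 - γ) * βm * β) * r
      + (1 - γ) ^ 2 * βm ^ 2 * t := by
    have h2 : 0 ≤ 2 * β * σ' * ((1 - γ) ^ 2 * βm ^ 2) * t := by positivity
    nlinarith [hzn', h2, hapos]
  have h3 : 2 * β * (β * q) ≥ 2 * β * ((1 - γ) * βm * r + σ' * p) := by
    have := mul_le_mul_of_nonneg_left hyp' (by linarith : (0:ℝ) ≤ 2 * β)
    linarith
  have h4 : 0 ≤ (1 + γ - γ ^ 2) * β ^ 2 * s :=
    mul_nonneg (mul_nonneg (by linarith) (sq_nonneg β)) hsn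
  linarith [hA, h3, h4]
end

section
/- Let m ≥ 2 and l ≥ 1. Let J ∈ ℝ^{(m−1)l×(m−1)l} be the lower block-triangular matrix whose (i, j)-th l×l block equals I_l when i ≥ j and 0 when i < j (1 ≤ i, j ≤ m−1), and let Ĩ := (I_l, I_l, …, I_l) ∈ ℝ^{l×(m−1)l}. Then: (i) Jᵀ + J = I_{(m−1)l} + Ĩᵀ Ĩ; (ii) for any β > 0 and γ ∈ (0, 1], with Q := [ β J, 0 ; −Ĩ, (1/β) I_l ] and N := γ [ √β I_{(m−1)l}, 0 ; −√β Ĩ, (1/√β) I_l ], one has Qᵀ + Q − (1/γ²) Nᵀ N = blockdiag(0_{(m−1)l}, (1/β) I_l), and the matrix G := Qᵀ + Q − (1/γ) Nᵀ N is symmetric positive semidefinite. -/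
open Matrix

/-- The block matrices (2.4)/(3.44) of the multi-block ADMM-type method:
with `J` the lower block-triangular matrix of identity blocks and
`Ĩ = (I_l, …, I_l)`, one has (i) `Jᵀ + J = I + ĨᵀĨ`, and (ii) for `β > 0`,
`γ ∈ (0,1]`, `Q = [βJ, 0; -Ĩ, (1/β)I]`, `N = γ[√βI, 0; -√βĨ, (1/√β)I]`:
`Qᵀ + Q - (1/γ²)NᵀN = blockdiag(0, (1/β)I)` and
`G = Qᵀ + Q - (1/γ)NᵀN` is positive semidefinite. -/
theorem stmt17 (m l : ℕ) (hm : 2 ≤ m) (hl : 1 ≤ l)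
    (J : Matrix (Fin (m - 1) × Fin l) (Fin (m - 1) × Fin l) ℝ)
    (hJ : ∀ p q, J p q = if q.1 ≤ p.1 ∧ p.2 = q.2 then 1 else 0)
    (Itil : Matrix (Fin l) (Fin (m - 1) × Fin l) ℝ)
    (hItil : ∀ a q, Itil a q = if a = q.2 then 1 else 0) :
    (Jᵀ + J = 1 + Itilᵀ * Itil) ∧
    (∀ β γ : ℝ, 0 < β → γ ∈ Set.Ioc (0 : ℝ) 1 →
      ∀ Q N : Matrix ((Fin (m - 1) × Fin l) ⊕ Fin l) ((Fin (m - 1) × Fin l) ⊕ Fin l) ℝ,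
        Q = Matrix.fromBlocks (β • J) 0 (-Itil) ((1 / β) • 1) →
        N = γ • Matrix.fromBlocks (Real.sqrt β • 1) 0 (-(Real.sqrt β • Itil))
              ((1 / Real.sqrt β) • 1) →
        (Qᵀ + Q - (1 / γ ^ 2) • (Nᵀ * N)
            = Matrix.fromBlocks 0 0 0 ((1 / β) • 1)) ∧
        (Qᵀ + Q - (1 / γ) • (Nᵀ * N)).PosSemidef) := by
  have h1 : Jᵀ + J = 1 + Itilᵀ * Itil := by
    ext p q
    have hsum : (Itilᵀ * Itil) p q = if p.2 = q.2 then 1 else 0 := by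
      simp [mul_apply, hItil, ite_mul, Finset.sum_ite_eq, Finset.sum_ite_eq', eq_comm]
    simp only [Matrix.add_apply, transpose_apply, hJ, one_apply, hsum]
    rcases p with ⟨p1, p2⟩; rcases q with ⟨q1, q2⟩
    simp only [Prod.mk.injEq]
    by_cases h2 : p2 = q2
    · subst h2
      rcases lt_trichotomy p1 q1 with h | rfl | h
      · simp [h.le, not_le.mpr h, h.ne]
      · simp
      · simp [h.le, not_le.mpr h, h.ne']
    · simp [h2, Ne.symm h2]
  refine ⟨h1, ?_⟩
  intro β γ hβ hγ Q N hQ hN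
  obtain ⟨hγ0, hγ1⟩ := hγ
  set B : Matrix ((Fin (m - 1) × Fin l) ⊕ Fin l) ((Fin (m - 1) × Fin l) ⊕ Fin l) ℝ :=
    Matrix.fromBlocks (Real.sqrt β • 1) 0 (-(Real.sqrt β • Itil)) ((1 / Real.sqrt β) • 1)
    with hB
  set D : Matrix ((Fin (m - 1) × Fin l) ⊕ Fin l) ((Fin (m - 1) × Fin l) ⊕ Fin l) ℝ :=
    Matrix.fromBlocks 0 0 0 ((1 / β) • 1) with hD
  -- key identity: Qᵀ + Q = Bᵀ * B + D
  have key : Qᵀ + Q = Bᵀ * B + D := by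
    subst hQ
    have hs : Real.sqrt β * Real.sqrt β = β := Real.mul_self_sqrt hβ.le
    have hs0 : Real.sqrt β ≠ 0 := by positivity
    rw [hB, hD, Matrix.fromBlocks_transpose, Matrix.fromBlocks_transpose,
      Matrix.fromBlocks_multiply, Matrix.fromBlocks_add, Matrix.fromBlocks_add]
    refine Matrix.fromBlocks_inj.mpr ⟨?_, ?_, ?_, ?_⟩
    · rw [Matrix.transpose_smul]
      have : β • Jᵀ + β • J = β • (1 : Matrix _ _ ℝ) + β • (Itilᵀ * Itil) := by
        rw [← smul_add, h1, smul_add]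
      rw [this]
      simp [Matrix.smul_mul, Matrix.mul_smul, smul_smul, hs, Matrix.transpose_smul,
        Matrix.transpose_neg]
    · simp [Matrix.smul_mul, Matrix.mul_smul, smul_smul, Matrix.transpose_smul,
        Matrix.transpose_neg, mul_one_div, hs0, inv_mul_cancel₀]
    · simp [Matrix.smul_mul, Matrix.mul_smul, smul_smul, hs0, mul_inv_cancel₀]
    · have h2 : (Real.sqrt β)⁻¹ * (Real.sqrt β)⁻¹ = β⁻¹ := by rw [← mul_inv, hs]
      simp [Matrix.smul_mul, Matrix.mul_smul, smul_smul, one_div, h2]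
  have hNN : Nᵀ * N = (γ * γ) • (Bᵀ * B) := by
    rw [hN, Matrix.transpose_smul, Matrix.smul_mul, Matrix.mul_smul, smul_smul]
  have hBpsd : (Bᵀ * B).PosSemidef := by
    simpa using Matrix.posSemidef_conjTranspose_mul_self B
  have hDpsd : D.PosSemidef := by
    have hb : (0 : ℝ) ≤ 1 / β := by positivity
    set C : Matrix ((Fin (m - 1) × Fin l) ⊕ Fin l) ((Fin (m - 1) × Fin l) ⊕ Fin l) ℝ :=
      Matrix.fromBlocks 0 0 0 (Real.sqrt (1 / β) • 1) with hC
    have hCC : Cᵀ * C = D := by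
      rw [hC, hD, Matrix.fromBlocks_transpose, Matrix.fromBlocks_multiply]
      have h2 : (Real.sqrt β)⁻¹ * (Real.sqrt β)⁻¹ = β⁻¹ := by
        rw [← mul_inv, Real.mul_self_sqrt hβ.le]
      refine Matrix.fromBlocks_inj.mpr ⟨?_, ?_, ?_, ?_⟩ <;>
        simp [Matrix.smul_mul, Matrix.mul_smul, smul_smul, Real.mul_self_sqrt hb, h2]
    rw [← hCC]
    simpa using Matrix.posSemidef_conjTranspose_mul_self C
  constructor
  · rw [hNN, smul_smul, key]
    have : 1 / γ ^ 2 * (γ * γ) = 1 := by field_simp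
    rw [this, one_smul]
    abel
  · have hγne : γ ≠ 0 := hγ0.ne'
    have hG : Qᵀ + Q - (1 / γ) • (Nᵀ * N) = (1 - γ) • (Bᵀ * B) + D := by
      rw [hNN, smul_smul, key]
      have : 1 / γ * (γ * γ) = γ := by field_simp
      rw [this, sub_smul, one_smul]
      abel
    rw [hG]
    have hsub : (0 : ℝ) ≤ 1 - γ := by linarith
    have hsmul : ((1 - γ) • (Bᵀ * B)).PosSemidef := by
      have hE : (Real.sqrt (1 - γ) • B)ᵀ * (Real.sqrt (1 - γ) • B) = (1 - γ) • (Bᵀ * B) := by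
        rw [Matrix.transpose_smul, Matrix.smul_mul, Matrix.mul_smul, smul_smul,
          Real.mul_self_sqrt hsub]
      rw [← hE]
      simpa using Matrix.posSemidef_conjTranspose_mul_self (Real.sqrt (1 - γ) • B)
    exact hsmul.add hDpsd
end

section
/- Let m ≥ 2, l ≥ 1, n_m ≥ 1. Let J ∈ ℝ^{(m−1)l×(m−1)l} be the lower block-triangular matrix whose (i, j)-th l×l block is I_l for i ≥ j and 0 for i < j, and Ĩ := (I_l, …, I_l) ∈ ℝ^{l×(m−1)l}. Let γ ∈ (0, 1], L > 0, A_m ∈ ℝ^{l×n_m}, and set μ := σ_min(A_m A_mᵀ). Let β, β⁺ > 0 satisfy 1/β² + μ/(Lβ) ≥ 1/(β⁺)² + (1 − γ)μ/(Lβ⁺). Define Q := [ β J, 0 ; −Ĩ, (1/β) I_l ], N := γ [ √β I_{(m−1)l}, 0 ; −√β Ĩ, (1/√β) I_l ], H := (1/γ) blockdiag(β J Jᵀ, (1/β) I_l), G := Qᵀ + Q − (1/γ) Nᵀ N, and H₀(s) := (1/γ) blockdiag( J Jᵀ, (1/s² + (1 − γ)μ/(L s)) I_l ) for s > 0. Let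 v^k = (w^k, λ^k), v^{k+1} = (w^{k+1}, λ^{k+1}), ṽ ∈ ℝ^{(m−1)l} × ℝ^l and v* = (w*, λ*) ∈ ℝ^{(m−1)l} × ℝ^l, and let g, g* ∈ ℝ^{n_m} satisfy g = A_mᵀ( (1/γ) λ^{k+1} + (1 − 1/γ) λ^k ) and g* = A_mᵀ λ*. Then (1/β)( ‖v^{k+1} − v*‖²_H + (1/L)‖g − g*‖² − ‖v^k − v*‖²_H + ‖v^k − ṽ‖²_G ) ≥ ‖v^{k+1} − v*‖²_{H₀(β⁺)} − ‖v^k − v*‖²_{H₀(β)}. -/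
open Matrix

/-- `minEig B` is the smallest eigenvalue of `B` (for a symmetric matrix, the
infimum of its eigenvalue set), denoted `σ_min(B)` in the paper. -/
noncomputable def minEig {m : Type*} [Fintype m] (B : Matrix m m ℝ) : ℝ :=
  sInf {μ : ℝ | ∃ v : m → ℝ, v ≠ 0 ∧ B.mulVec v = μ • v}


section aux
set_option linter.unusedSectionVars false

variable {n : Type*} [Fintype n] [DecidableEq n] {k : Type*} [Fintype k] [DecidableEq k]

lemma aux_dot_self_nonneg (v : n → ℝ) : 0 ≤ v ⬝ᵥ v := by
  simpa using dotProduct_self_star_nonneg v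

lemma aux_psd_dot (A : Matrix n k ℝ) (v : n → ℝ) : 0 ≤ v ⬝ᵥ (A * Aᵀ) *ᵥ v := by
  rw [← mulVec_mulVec, dotProduct_mulVec, ← mulVec_transpose]
  exact aux_dot_self_nonneg _

lemma aux_eig_nonneg (A : Matrix n k ℝ) {μ : ℝ} {v : n → ℝ} (hv : v ≠ 0)
    (h : (A * Aᵀ) *ᵥ v = μ • v) : 0 ≤ μ := by
  have h1 : 0 ≤ v ⬝ᵥ (A * Aᵀ) *ᵥ v := aux_psd_dot A v
  rw [h, dotProduct_smul, smul_eq_mul] at h1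
  have h2 : 0 < v ⬝ᵥ v :=
    (aux_dot_self_nonneg v).lt_of_ne' (fun h => hv (dotProduct_self_eq_zero.mp h))
  nlinarith

lemma aux_minEig_nonneg (A : Matrix n k ℝ) : 0 ≤ minEig (A * Aᵀ) := by
  apply Real.sInf_nonneg
  rintro μ ⟨v, hv, hveq⟩
  exact aux_eig_nonneg A hv hveq

lemma aux_bddBelow_eigs (A : Matrix n k ℝ) :
    BddBelow {μ : ℝ | ∃ v : n → ℝ, v ≠ 0 ∧ (A * Aᵀ).mulVec v = μ • v} := by
  refine ⟨0, ?_⟩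
  rintro μ ⟨v, hv, hveq⟩
  exact aux_eig_nonneg A hv hveq

set_option maxHeartbeats 800000 in
lemma aux_rayleigh (A : Matrix n k ℝ) (p : n → ℝ) :
    minEig (A * Aᵀ) * (p ⬝ᵥ p) ≤ p ⬝ᵥ (A * Aᵀ) *ᵥ p := by
  set B := A * Aᵀ with hBdef
  have hB : B.IsHermitian := by
    have := isHermitian_mul_conjTranspose_self A
    simpa [conjTranspose_eq_transpose_of_trivial] using this
  set U : Matrix n n ℝ := (IsHermitian.eigenvectorUnitary hB : Matrix n n ℝ) with hU
  have hUU : U * Uᵀ = 1 := by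
    have := (Matrix.mem_unitaryGroup_iff).mp (IsHermitian.eigenvectorUnitary hB).2
    simpa [star_eq_conjTranspose, conjTranspose_eq_transpose_of_trivial] using this
  have hst : B = U * diagonal hB.eigenvalues * Uᵀ := by
    have := hB.spectral_theorem
    simpa [RCLike.ofReal_real_eq_id, star_eq_conjTranspose,
      conjTranspose_eq_transpose_of_trivial] using this
  set y := Uᵀ *ᵥ p with hy
  have hyy : y ⬝ᵥ y = p ⬝ᵥ p := by
    calc y ⬝ᵥ y = (y ᵥ* Uᵀ) ⬝ᵥ p := dotProduct_mulVec _ _ _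
    _ = (U *ᵥ (Uᵀ *ᵥ p)) ⬝ᵥ p := by rw [vecMul_transpose]
    _ = ((U * Uᵀ) *ᵥ p) ⬝ᵥ p := by rw [mulVec_mulVec]
    _ = p ⬝ᵥ p := by rw [hUU, one_mulVec]
  have hq : p ⬝ᵥ B *ᵥ p = y ⬝ᵥ (diagonal hB.eigenvalues *ᵥ y) := by
    conv_lhs => rw [hst, ← mulVec_mulVec, ← mulVec_mulVec]
    rw [dotProduct_mulVec, ← mulVec_transpose]
  have hmin : ∀ i, minEig B ≤ hB.eigenvalues i := by
    intro i
    apply csInf_le (aux_bddBelow_eigs A)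
    refine ⟨(hB.eigenvectorBasis i : EuclideanSpace ℝ n), ?_, hB.mulVec_eigenvectorBasis i⟩
    intro h0
    have h1 : hB.eigenvectorBasis i = 0 := by
      ext j; exact congrFun h0 j
    have h2 := hB.eigenvectorBasis.orthonormal.1 i
    rw [h1] at h2; simp at h2
  rw [hq, ← hyy]
  have hterm : ∀ i ∈ Finset.univ, minEig B * (y i * y i) ≤ y i * (hB.eigenvalues i * y i) := by
    intro i _
    have := mul_le_mul_of_nonneg_right (hmin i) (mul_self_nonneg (y i))
    nlinarith [this]
  calc minEig B * (y ⬝ᵥ y) = ∑ i, minEig B * (y i * y i) := by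
        rw [dotProduct, Finset.mul_sum]
    _ ≤ ∑ i, y i * (hB.eigenvalues i * y i) := Finset.sum_le_sum hterm
    _ = y ⬝ᵥ (diagonal hB.eigenvalues *ᵥ y) := by simp [dotProduct, mulVec_diagonal]

end aux

section helpers
set_option linter.unusedSectionVars false
variable {n₁ n₂ : Type*} [Fintype n₁] [Fintype n₂] [DecidableEq n₂]

lemma qf_smul (c : ℝ) (M : Matrix n₁ n₁ ℝ) (w : n₁ → ℝ) : qf (c • M) w = c * qf M w := by
  unfold qf; rw [smul_mulVec, dotProduct_smul, smul_eq_mul]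

lemma qf_fromBlocks (A : Matrix n₁ n₁ ℝ) (B : Matrix n₁ n₂ ℝ) (C : Matrix n₂ n₁ ℝ)
    (D : Matrix n₂ n₂ ℝ) (x : n₁ → ℝ) (y : n₂ → ℝ) :
    qf (fromBlocks A B C D) (Sum.elim x y)
      = x ⬝ᵥ (A *ᵥ x + B *ᵥ y) + y ⬝ᵥ (C *ᵥ x + D *ᵥ y) := by
  unfold qf
  rw [fromBlocks_mulVec, sumElim_dotProduct_sumElim]
  simp [Sum.elim_comp_inl, Sum.elim_comp_inr]

lemma qf_blockdiag (A : Matrix n₁ n₁ ℝ) (c : ℝ) (x : n₁ → ℝ) (y : n₂ → ℝ) :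
    qf (fromBlocks A 0 0 (c • (1 : Matrix n₂ n₂ ℝ))) (Sum.elim x y)
      = x ⬝ᵥ A *ᵥ x + c * (y ⬝ᵥ y) := by
  rw [qf_fromBlocks]
  simp [smul_mulVec, dotProduct_smul]

lemma elim_sub (a c : n₁ → ℝ) (b d : n₂ → ℝ) :
    Sum.elim a b - Sum.elim c d = Sum.elim (a - c) (b - d) := by
  funext i; cases i <;> simp

end helpers

lemma JplusJt (M l : ℕ)
    (J : Matrix (Fin M × Fin l) (Fin M × Fin l) ℝ)
    (hJ : ∀ p q, J p q = if q.1 ≤ p.1 ∧ p.2 = q.2 then 1 else 0)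
    (Itil : Matrix (Fin l) (Fin M × Fin l) ℝ)
    (hItil : ∀ a q, Itil a q = if a = q.2 then 1 else 0) :
    J + Jᵀ = Itilᵀ * Itil + 1 := by
  ext ⟨i, s⟩ ⟨j, t⟩
  have hsum : (Itilᵀ * Itil) (i, s) (j, t) = if s = t then (1 : ℝ) else 0 := by
    simp only [mul_apply, transpose_apply, hItil]
    rw [Finset.sum_eq_single s]
    · simp
    · intro b _ hb; simp [hb]
    · intro h; simp at h
  simp only [Matrix.add_apply, transpose_apply, hJ, hsum, one_apply]
  by_cases hst : s = t
  · subst hst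
    rcases lt_trichotomy i j with h | h | h
    · simp [h.le, h.ne, not_le.mpr h, Prod.ext_iff]
    · subst h; simp
    · simp [h.le, h.ne', not_le.mpr h, Prod.ext_iff]
  · simp [hst, Ne.symm hst, Prod.ext_iff]

lemma scalar_key_s18 (γ L β βp μ a1 a2 c1 c2 GG qG : ℝ)
    (hγ0 : 0 < γ) (hL : 0 < L) (hβ : 0 < β) (hβp : 0 < βp)
    (hc1 : 0 ≤ c1) (hqG : 0 ≤ qG)
    (hGG : μ * ((1/γ) * c1 + (1 - 1/γ) * c2) ≤ GG)
    (hstep : 1 / βp ^ 2 + (1 - γ) * μ / (L * βp) ≤ 1 / β ^ 2 + μ / (L * β)) :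
    (1/γ) * (a1 + (1 / βp ^ 2 + (1 - γ) * μ / (L * βp)) * c1)
      - (1/γ) * (a2 + (1 / β ^ 2 + (1 - γ) * μ / (L * β)) * c2)
    ≤ (1/β) * ((1/γ) * (β * a1 + (1/β) * c1) + (1/L) * GG
        - (1/γ) * (β * a2 + (1/β) * c2) + qG) := by
  have hγ' : γ ≠ 0 := hγ0.ne'
  have hβ' : β ≠ 0 := hβ.ne'
  have hL' : L ≠ 0 := hL.ne'
  have e1 : (1/β) * ((1/γ) * (β * a1 + (1/β) * c1)
        + (1/L) * (μ * ((1/γ) * c1 + (1 - 1/γ) * c2))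
        - (1/γ) * (β * a2 + (1/β) * c2) + qG)
      = ((1/γ) * (a1 + (1 / β ^ 2 + μ / (L * β)) * c1)
          - (1/γ) * (a2 + (1 / β ^ 2 + (1 - γ) * μ / (L * β)) * c2)) + (1/β) * qG := by
    field_simp
    ring
  have h4 : (1/γ) * ((1 / βp ^ 2 + (1 - γ) * μ / (L * βp)) * c1)
      ≤ (1/γ) * ((1 / β ^ 2 + μ / (L * β)) * c1) := by
    have h := mul_le_mul_of_nonneg_right hstep hc1
    exact mul_le_mul_of_nonneg_left h (by positivity)
  have h5 : (1/β) * ((1/γ) * (β * a1 + (1/β) * c1)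
        + (1/L) * (μ * ((1/γ) * c1 + (1 - 1/γ) * c2))
        - (1/γ) * (β * a2 + (1/β) * c2) + qG)
      ≤ (1/β) * ((1/γ) * (β * a1 + (1/β) * c1) + (1/L) * GG
        - (1/γ) * (β * a2 + (1/β) * c2) + qG) := by
    apply mul_le_mul_of_nonneg_left _ (by positivity)
    have := mul_le_mul_of_nonneg_left hGG (le_of_lt (by positivity : (0:ℝ) < 1/L))
    linarith
  have h6 : 0 ≤ (1/β) * qG := by positivity
  nlinarith [e1, h4, h5, h6]

set_option maxHeartbeats 1600000 in
/-- Theorem 3.5: the `m`-block ADMM-type method for (P3), with `f_m`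
`L`-gradient Lipschitz continuous, satisfies the additional convergence
condition (CC3) with `rᵏ = 1/β` and
`H₀(s) = (1/γ)blockdiag(JJᵀ, (1/s² + (1-γ)μ/(Ls))I)`, `μ = σ_min(A_mA_mᵀ)`,
under the step-size condition `1/β² + μ/(Lβ) ≥ 1/(β⁺)² + (1-γ)μ/(Lβ⁺)`.
Here `g = ∇f_m(x̃_mᵏ) = A_mᵀ((1/γ)λ^{k+1} + (1-1/γ)λᵏ)` and `g* = A_mᵀλ*`. -/
theorem stmt18 (m l nm : ℕ) (hm : 2 ≤ m) (hl : 1 ≤ l) (hnm : 1 ≤ nm)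
    (J : Matrix (Fin (m - 1) × Fin l) (Fin (m - 1) × Fin l) ℝ)
    (hJ : ∀ p q, J p q = if q.1 ≤ p.1 ∧ p.2 = q.2 then 1 else 0)
    (Itil : Matrix (Fin l) (Fin (m - 1) × Fin l) ℝ)
    (hItil : ∀ a q, Itil a q = if a = q.2 then 1 else 0)
    (γ L : ℝ) (hγ : γ ∈ Set.Ioc (0 : ℝ) 1) (hL : 0 < L)
    (Am : Matrix (Fin l) (Fin nm) ℝ)
    (μ : ℝ) (hμ : μ = minEig (Am * Amᵀ))
    (β βp : ℝ) (hβ : 0 < β) (hβp : 0 < βp)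
    (hstep : 1 / β ^ 2 + μ / (L * β) ≥ 1 / βp ^ 2 + (1 - γ) * μ / (L * βp))
    (Q N H G : Matrix ((Fin (m - 1) × Fin l) ⊕ Fin l) ((Fin (m - 1) × Fin l) ⊕ Fin l) ℝ)
    (hQ : Q = Matrix.fromBlocks (β • J) 0 (-Itil) ((1 / β) • 1))
    (hN : N = γ • Matrix.fromBlocks (Real.sqrt β • 1) 0 (-(Real.sqrt β • Itil))
        ((1 / Real.sqrt β) • 1))
    (hH : H = (1 / γ) • Matrix.fromBlocks (β • (J * Jᵀ)) 0 0 ((1 / β) • 1))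
    (hG : G = Qᵀ + Q - (1 / γ) • (Nᵀ * N))
    (H₀ : ℝ → Matrix ((Fin (m - 1) × Fin l) ⊕ Fin l) ((Fin (m - 1) × Fin l) ⊕ Fin l) ℝ)
    (hH₀ : ∀ s, H₀ s = (1 / γ) • Matrix.fromBlocks (J * Jᵀ) 0 0
        ((1 / s ^ 2 + (1 - γ) * μ / (L * s)) • 1))
    (wk wkk wt ws : Fin (m - 1) × Fin l → ℝ)
    (lamk lamkk lamt lams : Fin l → ℝ)
    (g gs : Fin nm → ℝ)
    (hg : g = Amᵀ.mulVec ((1 / γ) • lamkk + (1 - 1 / γ) • lamk))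
    (hgs : gs = Amᵀ.mulVec lams) :
    (1 / β) * (qf H (Sum.elim wkk lamkk - Sum.elim ws lams)
        + (1 / L) * ((g - gs) ⬝ᵥ (g - gs))
        - qf H (Sum.elim wk lamk - Sum.elim ws lams)
        + qf G (Sum.elim wk lamk - Sum.elim wt lamt))
      ≥ qf (H₀ βp) (Sum.elim wkk lamkk - Sum.elim ws lams)
        - qf (H₀ β) (Sum.elim wk lamk - Sum.elim ws lams) := by
  obtain ⟨hγ0, hγ1⟩ := hγ
  have hγ' : γ ≠ 0 := hγ0.ne'
  have hβ' : β ≠ 0 := hβ.ne'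
  have hL' : L ≠ 0 := hL.ne'
  have hsb : Real.sqrt β * Real.sqrt β = β := Real.mul_self_sqrt hβ.le
  have hsb0 : Real.sqrt β ≠ 0 := by positivity
  -- abbreviations
  set u1 : Fin (m - 1) × Fin l → ℝ := wkk - ws with hu1
  set u2 : Fin (m - 1) × Fin l → ℝ := wk - ws with hu2
  set x : Fin (m - 1) × Fin l → ℝ := wk - wt with hx
  set d1 : Fin l → ℝ := lamkk - lams with hd1
  set d2 : Fin l → ℝ := lamk - lams with hd2
  set y : Fin l → ℝ := lamk - lamt with hy
  set a : Fin l → ℝ := Itil *ᵥ x with ha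
  set a1 : ℝ := u1 ⬝ᵥ (J * Jᵀ) *ᵥ u1 with ha1
  set a2 : ℝ := u2 ⬝ᵥ (J * Jᵀ) *ᵥ u2 with ha2
  -- quadratic form of H
  have EQH1 : qf H (Sum.elim u1 d1)
      = (1/γ) * (β * a1 + (1/β) * (d1 ⬝ᵥ d1)) := by
    rw [hH, qf_smul, qf_blockdiag, smul_mulVec, dotProduct_smul, smul_eq_mul, ha1]
  have EQH2 : qf H (Sum.elim u2 d2)
      = (1/γ) * (β * a2 + (1/β) * (d2 ⬝ᵥ d2)) := by
    rw [hH, qf_smul, qf_blockdiag, smul_mulVec, dotProduct_smul, smul_eq_mul, ha2]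
  have EQ0p : qf (H₀ βp) (Sum.elim u1 d1)
      = (1/γ) * (a1 + (1 / βp ^ 2 + (1 - γ) * μ / (L * βp)) * (d1 ⬝ᵥ d1)) := by
    rw [hH₀, qf_smul, qf_blockdiag, ha1]
  have EQ0b : qf (H₀ β) (Sum.elim u2 d2)
      = (1/γ) * (a2 + (1 / β ^ 2 + (1 - γ) * μ / (L * β)) * (d2 ⬝ᵥ d2)) := by
    rw [hH₀, qf_smul, qf_blockdiag, ha2]
  -- the G quadratic form
  have hQt : Q *ᵥ Sum.elim x y = Sum.elim (β • (J *ᵥ x)) (-(Itil *ᵥ x) + (1/β) • y) := by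
    rw [hQ, fromBlocks_mulVec]
    simp [smul_mulVec, neg_mulVec, Sum.elim_comp_inl, Sum.elim_comp_inr]
  have tQt : Sum.elim x y ⬝ᵥ Q *ᵥ Sum.elim x y
      = β * (x ⬝ᵥ J *ᵥ x) - (a ⬝ᵥ y) + (1/β) * (y ⬝ᵥ y) := by
    rw [hQt, sumElim_dotProduct_sumElim]
    simp only [dotProduct_add, dotProduct_neg, dotProduct_smul, smul_eq_mul]
    rw [dotProduct_comm y (Itil *ᵥ x), ← ha]
    ring
  have hNt : N *ᵥ Sum.elim x y
      = γ • Sum.elim (Real.sqrt β • x) (-(Real.sqrt β • a) + (1/Real.sqrt β) • y) := by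
    rw [hN, smul_mulVec, fromBlocks_mulVec]
    simp [smul_mulVec, neg_mulVec, Sum.elim_comp_inl, Sum.elim_comp_inr, ha]
  have hNtNt : (N *ᵥ Sum.elim x y) ⬝ᵥ (N *ᵥ Sum.elim x y)
      = γ^2 * (β * (x ⬝ᵥ x) + (β * (a ⬝ᵥ a) - 2 * (a ⬝ᵥ y) + (1/β) * (y ⬝ᵥ y))) := by
    rw [hNt, smul_dotProduct, dotProduct_smul, sumElim_dotProduct_sumElim]
    have h1 : (Real.sqrt β • x) ⬝ᵥ (Real.sqrt β • x) = β * (x ⬝ᵥ x) := by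
      rw [smul_dotProduct, dotProduct_smul, smul_eq_mul, smul_eq_mul, ← mul_assoc, hsb]
    have h2 : (-(Real.sqrt β • a) + (1/Real.sqrt β) • y) ⬝ᵥ
        (-(Real.sqrt β • a) + (1/Real.sqrt β) • y)
        = β * (a ⬝ᵥ a) - 2 * (a ⬝ᵥ y) + (1/β) * (y ⬝ᵥ y) := by
      simp only [add_dotProduct, dotProduct_add, neg_dotProduct, dotProduct_neg,
        smul_dotProduct, dotProduct_smul, smul_eq_mul, neg_neg]
      rw [dotProduct_comm y a]
      have e2 : Real.sqrt β * (1/Real.sqrt β) = 1 := mul_one_div_cancel hsb0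
      have e3 : (1/Real.sqrt β) * (1/Real.sqrt β) = 1/β := by
        rw [div_mul_div_comm, one_mul, hsb]
      linear_combination (a ⬝ᵥ a) * hsb - 2 * (a ⬝ᵥ y) * e2 + (y ⬝ᵥ y) * e3
    rw [h1, h2]
    simp only [smul_eq_mul]
    ring
  have hJJ := JplusJt (m-1) l J hJ Itil hItil
  have hxJx : 2 * (x ⬝ᵥ J *ᵥ x) = (a ⬝ᵥ a) + (x ⬝ᵥ x) := by
    have h := congrArg (fun M : Matrix (Fin (m-1) × Fin l) (Fin (m-1) × Fin l) ℝ
      => x ⬝ᵥ M *ᵥ x) hJJ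
    simp only [add_mulVec, dotProduct_add, one_mulVec] at h
    have h1 : x ⬝ᵥ Jᵀ *ᵥ x = x ⬝ᵥ J *ᵥ x := by
      rw [dotProduct_mulVec, vecMul_transpose, dotProduct_comm]
    have h2 : x ⬝ᵥ (Itilᵀ * Itil) *ᵥ x = a ⬝ᵥ a := by
      rw [← mulVec_mulVec, dotProduct_mulVec, vecMul_transpose, ← ha]
    linarith
  have hGq : qf G (Sum.elim x y) = 2 * (Sum.elim x y ⬝ᵥ Q *ᵥ Sum.elim x y)
      - (1/γ) * ((N *ᵥ Sum.elim x y) ⬝ᵥ (N *ᵥ Sum.elim x y)) := by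
    rw [hG]; unfold qf
    rw [sub_mulVec, add_mulVec, dotProduct_sub, dotProduct_add]
    have h1 : Sum.elim x y ⬝ᵥ Qᵀ *ᵥ Sum.elim x y
        = Sum.elim x y ⬝ᵥ Q *ᵥ Sum.elim x y := by
      rw [dotProduct_mulVec, vecMul_transpose, dotProduct_comm]
    have h2 : Sum.elim x y ⬝ᵥ ((1/γ) • (Nᵀ * N)) *ᵥ Sum.elim x y
        = (1/γ) * ((N *ᵥ Sum.elim x y) ⬝ᵥ (N *ᵥ Sum.elim x y)) := by
      rw [smul_mulVec, dotProduct_smul, smul_eq_mul, ← mulVec_mulVec,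
        dotProduct_mulVec, vecMul_transpose]
    rw [h1, h2]; ring
  have EQG : qf G (Sum.elim x y)
      = (1-γ) * β * (a ⬝ᵥ a) + (1-γ) * β * (x ⬝ᵥ x) - 2 * (1-γ) * (a ⬝ᵥ y)
        + ((2-γ)/β) * (y ⬝ᵥ y) := by
    rw [hGq, tQt, hNtNt]
    have hγγ : (1/γ) * γ^2 = γ := by field_simp
    linear_combination β * hxJx
      - (β * (x ⬝ᵥ x) + β * (a ⬝ᵥ a) - 2 * (a ⬝ᵥ y) + (1/β) * (y ⬝ᵥ y)) * hγγ
  have hqGnn : 0 ≤ qf G (Sum.elim x y) := by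
    have hA := aux_dot_self_nonneg (a - (1/β) • y)
    have hexp : (a - (1/β) • y) ⬝ᵥ (a - (1/β) • y)
        = (a ⬝ᵥ a) - 2 * (1/β) * (a ⬝ᵥ y) + (1/β)^2 * (y ⬝ᵥ y) := by
      simp only [sub_dotProduct, dotProduct_sub, smul_dotProduct, dotProduct_smul, smul_eq_mul]
      rw [dotProduct_comm y a]
      ring
    have hsplit : qf G (Sum.elim x y)
        = (1-γ) * β * ((a - (1/β) • y) ⬝ᵥ (a - (1/β) • y))
          + (1-γ) * β * (x ⬝ᵥ x) + (1/β) * (y ⬝ᵥ y) := by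
      rw [EQG, hexp]
      field_simp
      ring
    have h1γ : 0 ≤ 1 - γ := by linarith
    rw [hsplit]
    have := aux_dot_self_nonneg x
    have := aux_dot_self_nonneg y
    positivity
  -- the gradient term
  have hμ0 : 0 ≤ μ := hμ ▸ aux_minEig_nonneg Am
  set pv : Fin l → ℝ := (1/γ) • d1 + (1 - 1/γ) • d2 with hpv
  have hp : g - gs = Amᵀ *ᵥ pv := by
    have hvec : ((1 / γ) • lamkk + (1 - 1 / γ) • lamk) - lams = pv := by
      funext i
      simp only [hpv, hd1, hd2, Pi.add_apply, Pi.sub_apply, Pi.smul_apply, smul_eq_mul]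
      ring
    rw [hg, hgs, ← mulVec_sub, hvec]
  have hGG : μ * ((1/γ) * (d1 ⬝ᵥ d1) + (1 - 1/γ) * (d2 ⬝ᵥ d2)) ≤ (g - gs) ⬝ᵥ (g - gs) := by
    have h1 : (g - gs) ⬝ᵥ (g - gs) = pv ⬝ᵥ (Am * Amᵀ) *ᵥ pv := by
      rw [hp, ← mulVec_mulVec, dotProduct_mulVec, vecMul_transpose, dotProduct_comm]
    have h2 : minEig (Am * Amᵀ) * (pv ⬝ᵥ pv) ≤ pv ⬝ᵥ (Am * Amᵀ) *ᵥ pv :=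
      aux_rayleigh Am pv
    have h3 : (1/γ) * (d1 ⬝ᵥ d1) + (1 - 1/γ) * (d2 ⬝ᵥ d2) ≤ pv ⬝ᵥ pv := by
      have hexp : pv ⬝ᵥ pv - ((1/γ) * (d1 ⬝ᵥ d1) + (1 - 1/γ) * (d2 ⬝ᵥ d2))
          = (1/γ) * ((1/γ) - 1) * ((d1 - d2) ⬝ᵥ (d1 - d2)) := by
        simp only [hpv, add_dotProduct, dotProduct_add, smul_dotProduct, dotProduct_smul,
          sub_dotProduct, dotProduct_sub, smul_eq_mul]
        rw [dotProduct_comm d2 d1]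
        ring
      have hge1 : 1 ≤ 1/γ := by rw [le_div_iff₀ hγ0]; linarith
      have hD : 0 ≤ (1/γ) * ((1/γ) - 1) * ((d1 - d2) ⬝ᵥ (d1 - d2)) :=
        mul_nonneg (mul_nonneg (by positivity) (by linarith))
          (aux_dot_self_nonneg (d1 - d2))
      linarith
    calc μ * ((1/γ) * (d1 ⬝ᵥ d1) + (1 - 1/γ) * (d2 ⬝ᵥ d2))
        ≤ μ * (pv ⬝ᵥ pv) := mul_le_mul_of_nonneg_left h3 hμ0
      _ = minEig (Am * Amᵀ) * (pv ⬝ᵥ pv) := by rw [hμ]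
      _ ≤ pv ⬝ᵥ (Am * Amᵀ) *ᵥ pv := h2
      _ = (g - gs) ⬝ᵥ (g - gs) := h1.symm
  -- assemble
  have E1 : Sum.elim wkk lamkk - Sum.elim ws lams = Sum.elim u1 d1 := elim_sub _ _ _ _
  have E2 : Sum.elim wk lamk - Sum.elim ws lams = Sum.elim u2 d2 := elim_sub _ _ _ _
  have E3 : Sum.elim wk lamk - Sum.elim wt lamt = Sum.elim x y := elim_sub _ _ _ _
  rw [E1, E2, E3, EQH1, EQH2, EQ0p, EQ0b]
  exact scalar_key_s18 γ L β βp μ a1 a2 (d1 ⬝ᵥ d1) (d2 ⬝ᵥ d2) ((g - gs) ⬝ᵥ (g - gs))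
    (qf G (Sum.elim x y)) hγ0 hL hβ hβp (aux_dot_self_nonneg d1) hqGnn hGG hstep
end
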